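/- arXiv:2403.14704 — 4 statements merged into one kernel-verified Lean document; each statement's English description precedes it below -/
import Mathlib

section
/- Downward validity lemma for standard formulas: let γ ∨ (⋀_{i∈N} ⟨A_i⟩φ_i → ⋁_{j∈P} ⟨B_j⟩ψ_j) be a standard formula, and assume it is MCL-valid. Then at least one of the following holds: (a) γ is MCL-valid; (b) there exist i ∈ N and j ∈ P such that A_i ⊆ B_j and the formula (φ_{N0} ∧ φ_i) → ψ_j is MCL-valid, where N0 = {i ∈ N | A_i = ∅} and φ_{N0} = ⋀{φ_i | i ∈ N0}. -/
open scoped Classical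

/-- A joint action of a coalition `A`: an assignment of an action to each agent in `A`. -/
def JA (Agent Action : Type) (A : Set Agent) : Type :=
  (a : Agent) → a ∈ A → Action

namespace JA

variable {Agent Action : Type}

/-- The restriction `σ|_B` of a joint action of `A` to a subcoalition `B ⊆ A`. -/
def restrict {A B : Set Agent} (h : B ⊆ A) (σ : JA Agent Action A) : JA Agent Action B :=
  fun a ha => σ a (h ha)

/-- The union `σ_A ∪ σ_B` of joint actions of coalitions `A` and `B`. -/
noncomputable def union {A B : Set Agent} (σA : JA Agent Action A) (σB : JA Agent Action B) :
    JA Agent Action (A ∪ B) :=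
  fun a ha =>
    if h : a ∈ A then σA a h else σB a ((show a ∈ A ∨ a ∈ B from ha).resolve_left h)

/-- Transport of a joint action along an equality of coalitions. -/
def cast {A B : Set Agent} (h : A = B) (σ : JA Agent Action A) : JA Agent Action B :=
  fun a ha => σ a (by rw [h]; exact ha)

end JA

/-- An abstract multi-agent action model. -/
structure AMAM (Agent AP : Type) : Type 1 where
  State : Type
  Action : Type
  state_nonempty : Nonempty State
  action_nonempty : Nonempty Action
  av : (A : Set Agent) → State → Set (JA Agent Action A)
  out : (A : Set Agent) → State → JA Agent Action A → Set State
  lab : State → Set AP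

/-- `⊕{Sa(a) | a ∈ A}`: merge of a family of sets of joint actions of singleton coalitions,
indexed by the agents in `A`: the set of joint actions of `A` obtained as unions `⋃_{a∈A} f(a)`
over choice functions `f` with `f(a) ∈ Sa(a)`. -/
def oplusSingle {Agent Action : Type} (A : Set Agent)
    (Sa : (a : Agent) → Set (JA Agent Action ({a} : Set Agent))) :
    Set (JA Agent Action A) :=
  {σ | ∃ f : (a : Agent) → a ∈ A → JA Agent Action ({a} : Set Agent),
        (∀ (a : Agent) (ha : a ∈ A), f a ha ∈ Sa a) ∧
        (∀ (a : Agent) (ha : a ∈ A), σ a ha = f a ha a rfl)}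

/-- A concurrent game model. -/
structure IsCGM {Agent AP : Type} (M : AMAM Agent AP) : Prop where
  av_agent_nonempty : ∀ (a : Agent) (s : M.State), (M.av {a} s).Nonempty
  av_oplus : ∀ (A : Set Agent) (s : M.State),
    M.av A s = oplusSingle A (fun a => M.av {a} s)
  out_det : ∀ (s : M.State) (σ : JA Agent M.Action (Set.univ : Set Agent)),
    (σ ∈ M.av Set.univ s → ∃ t : M.State, M.out Set.univ s σ = {t}) ∧
    (σ ∉ M.av Set.univ s → M.out Set.univ s σ = ∅)
  out_union : ∀ (A : Set Agent) (s : M.State) (σ : JA Agent M.Action A),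
    M.out A s σ = {t | ∃ σG : JA Agent M.Action (Set.univ : Set Agent),
      JA.restrict (Set.subset_univ A) σG = σ ∧ t ∈ M.out Set.univ s σG}

/-- A general concurrent game model. -/
structure IsGCGM {Agent AP : Type} (M : AMAM Agent AP) : Prop where
  av_restrict : ∀ (A : Set Agent) (s : M.State),
    M.av A s = {σ | ∃ σG ∈ M.av Set.univ s, JA.restrict (Set.subset_univ A) σG = σ}
  av_grand : ∀ s : M.State,
    M.av Set.univ s = {σ | M.out Set.univ s σ ≠ ∅}
  out_union : ∀ (A : Set Agent) (s : M.State) (σ : JA Agent M.Action A),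
    M.out A s σ = {t | ∃ σG : JA Agent M.Action (Set.univ : Set Agent),
      JA.restrict (Set.subset_univ A) σG = σ ∧ t ∈ M.out Set.univ s σG}

/-- The language `Φ` of coalition logic. -/
inductive Formula (Agent AP : Type) : Type
  | top : Formula Agent AP
  | atom : AP → Formula Agent AP
  | neg : Formula Agent AP → Formula Agent AP
  | and : Formula Agent AP → Formula Agent AP → Formula Agent AP
  | coal : Set Agent → Formula Agent AP → Formula Agent AP

namespace Formula

variable {Agent AP : Type}

def bot : Formula Agent AP := .neg .top
def or (φ ψ : Formula Agent AP) : Formula Agent AP := .neg ((φ.neg).and (ψ.neg))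
def imp (φ ψ : Formula Agent AP) : Formula Agent AP := (φ.neg).or ψ
def iff (φ ψ : Formula Agent AP) : Formula Agent AP := (φ.imp ψ).and (ψ.imp φ)

/-- Modal depth. -/
def mdepth : Formula Agent AP → ℕ
  | .top => 0
  | .atom _ => 0
  | .neg φ => φ.mdepth
  | .and φ ψ => max φ.mdepth ψ.mdepth
  | .coal _ φ => φ.mdepth + 1

end Formula

/-- Satisfaction of a formula at a state of an abstract multi-agent action model. -/
def Sat {Agent AP : Type} (M : AMAM Agent AP) : M.State → Formula Agent AP → Prop
  | _, .top => True
  | s, .atom p => p ∈ M.lab s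
  | s, .neg φ => ¬ Sat M s φ
  | s, .and φ ψ => Sat M s φ ∧ Sat M s ψ
  | s, .coal A φ => ∃ σ ∈ M.av A s, ∀ t ∈ M.out A s σ, Sat M t φ

/-- CL-validity: truth at every state of every concurrent game model. -/
def CLValid {Agent AP : Type} (φ : Formula Agent AP) : Prop :=
  ∀ M : AMAM Agent AP, IsCGM M → ∀ s : M.State, Sat M s φ

/-- MCL-validity: truth at every state of every general concurrent game model. -/
def MCLValid {Agent AP : Type} (φ : Formula Agent AP) : Prop :=
  ∀ M : AMAM Agent AP, IsGCGM M → ∀ s : M.State, Sat M s φ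

/-- Propositional evaluation of a formula under a valuation, treating coalition
formulas (and atoms) as propositional atoms. -/
def propEval {Agent AP : Type} (v : Formula Agent AP → Bool) : Formula Agent AP → Bool
  | .top => true
  | .atom p => v (.atom p)
  | .neg φ => !(propEval v φ)
  | .and φ ψ => propEval v φ && propEval v ψ
  | .coal A φ => v (.coal A φ)

/-- `φ` is (an instance of) a propositional tautology. -/
def Tautology {Agent AP : Type} (φ : Formula Agent AP) : Prop :=
  ∀ v : Formula Agent AP → Bool, propEval v φ = true

/-- `φ` is propositionally satisfiable. -/
def PropSatisfiable {Agent AP : Type} (φ : Formula Agent AP) : Prop :=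
  ∃ v : Formula Agent AP → Bool, propEval v φ = true

/-- Pauly's axiomatic system for Coalition Logic CL. -/
inductive PaulyCL {Agent AP : Type} : Formula Agent AP → Prop
  | tau {φ : Formula Agent AP} : Tautology φ → PaulyCL φ
  | mon (A : Set Agent) (φ ψ : Formula Agent AP) :
      PaulyCL ((Formula.coal A (φ.and ψ)).imp (Formula.coal A φ))
  | live (A : Set Agent) : PaulyCL ((Formula.coal A Formula.bot).neg)
  | ser (A : Set Agent) : PaulyCL (Formula.coal A Formula.top)
  | ia {A B : Set Agent} (h : A ∩ B = ∅) (φ ψ : Formula Agent AP) :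
      PaulyCL (((Formula.coal A φ).and (Formula.coal B ψ)).imp
        (Formula.coal (A ∪ B) (φ.and ψ)))
  | max (φ : Formula Agent AP) :
      PaulyCL (((Formula.coal ∅ φ.neg).neg).imp (Formula.coal Set.univ φ))
  | mp {φ ψ : Formula Agent AP} : PaulyCL (φ.imp ψ) → PaulyCL φ → PaulyCL ψ
  | re {φ ψ : Formula Agent AP} (A : Set Agent) :
      PaulyCL (φ.iff ψ) → PaulyCL ((Formula.coal A φ).iff (Formula.coal A ψ))

/-- The alternative axiomatic system for Coalition Logic CL. -/
inductive AltCL {Agent AP : Type} : Formula Agent AP → Prop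
  | tau {φ : Formula Agent AP} : Tautology φ → AltCL φ
  | mg (A : Set Agent) (φ ψ : Formula Agent AP) :
      AltCL ((Formula.coal ∅ (φ.imp ψ)).imp ((Formula.coal A φ).imp (Formula.coal A ψ)))
  | mc {A B : Set Agent} (h : A ⊆ B) (φ : Formula Agent AP) :
      AltCL ((Formula.coal A φ).imp (Formula.coal B φ))
  | live (A : Set Agent) : AltCL ((Formula.coal A Formula.bot).neg)
  | ser (A : Set Agent) : AltCL (Formula.coal A Formula.top)
  | ia {A B : Set Agent} (h : A ∩ B = ∅) (φ ψ : Formula Agent AP) :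
      AltCL (((Formula.coal A φ).and (Formula.coal B ψ)).imp
        (Formula.coal (A ∪ B) (φ.and ψ)))
  | det (A : Set Agent) (φ ψ : Formula Agent AP) :
      AltCL ((Formula.coal A (φ.or ψ)).imp ((Formula.coal A φ).or (Formula.coal Set.univ ψ)))
  | mp {φ ψ : Formula Agent AP} : AltCL (φ.imp ψ) → AltCL φ → AltCL ψ
  | cn {φ : Formula Agent AP} (A : Set Agent) (ψ : Formula Agent AP) :
      AltCL φ → AltCL ((Formula.coal A ψ).imp (Formula.coal ∅ φ))

/-- The axiomatic system for Minimal Coalition Logic MCL. -/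
inductive MCLProv {Agent AP : Type} : Formula Agent AP → Prop
  | tau {φ : Formula Agent AP} : Tautology φ → MCLProv φ
  | mg (A : Set Agent) (φ ψ : Formula Agent AP) :
      MCLProv ((Formula.coal ∅ (φ.imp ψ)).imp ((Formula.coal A φ).imp (Formula.coal A ψ)))
  | mc {A B : Set Agent} (h : A ⊆ B) (φ : Formula Agent AP) :
      MCLProv ((Formula.coal A φ).imp (Formula.coal B φ))
  | live (A : Set Agent) : MCLProv ((Formula.coal A Formula.bot).neg)
  | mp {φ ψ : Formula Agent AP} : MCLProv (φ.imp ψ) → MCLProv φ → MCLProv ψ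
  | cn {φ : Formula Agent AP} (A : Set Agent) (ψ : Formula Agent AP) :
      MCLProv φ → MCLProv ((Formula.coal A ψ).imp (Formula.coal ∅ φ))

/-- Literals of classical propositional logic. -/
inductive IsLiteral {Agent AP : Type} : Formula Agent AP → Prop
  | pos (p : AP) : IsLiteral (Formula.atom p)
  | neg (p : AP) : IsLiteral ((Formula.atom p).neg)

/-- Elementary disjunctions: disjunctions of (possibly zero) literals. -/
inductive IsElemDisj {Agent AP : Type} : Formula Agent AP → Prop
  | bot : IsElemDisj Formula.bot
  | lit {φ : Formula Agent AP} : IsLiteral φ → IsElemDisj φ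
  | disj {φ ψ : Formula Agent AP} : IsElemDisj φ → IsElemDisj ψ → IsElemDisj (φ.or ψ)

/-- Elementary conjunctions: conjunctions of (possibly zero) literals. -/
inductive IsElemConj {Agent AP : Type} : Formula Agent AP → Prop
  | top : IsElemConj Formula.top
  | lit {φ : Formula Agent AP} : IsLiteral φ → IsElemConj φ
  | conj {φ ψ : Formula Agent AP} : IsElemConj φ → IsElemConj ψ → IsElemConj (φ.and ψ)

/-- Conjunction of a list of formulas. -/
def bigAnd {Agent AP : Type} : List (Formula Agent AP) → Formula Agent AP
  | [] => Formula.top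
  | [φ] => φ
  | φ :: l => φ.and (bigAnd l)

/-- Disjunction of a list of formulas. -/
def bigOr {Agent AP : Type} : List (Formula Agent AP) → Formula Agent AP
  | [] => Formula.bot
  | [φ] => φ
  | φ :: l => φ.or (bigOr l)

/-- The data of a standard formula
`γ ∨ (⋀_{i∈N} ⟨A_i⟩φ_i → ⋁_{j∈P} ⟨B_j⟩ψ_j)`. -/
structure StdFormula (Agent AP : Type) where
  γ : Formula Agent AP
  hγ : IsElemDisj γ
  n : ℕ
  m : ℕ
  hm : 0 < m
  A : Fin n → Set Agent
  φ : Fin n → Formula Agent AP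
  B : Fin m → Set Agent
  ψ : Fin m → Formula Agent AP
  hN : n ≠ 0 → ∃ i : Fin n, A i = (∅ : Set Agent) ∧ φ i = Formula.top
  hP : ∃ j : Fin m, B j = (Set.univ : Set Agent) ∧ ψ j = Formula.bot

/-- The standard formula determined by the data. -/
def StdFormula.toFormula {Agent AP : Type} (S : StdFormula Agent AP) : Formula Agent AP :=
  S.γ.or ((bigAnd (List.ofFn fun i => Formula.coal (S.A i) (S.φ i))).imp
      (bigOr (List.ofFn fun j => Formula.coal (S.B j) (S.ψ j))))

/-- `φ_{N0} = ⋀{φ_i | i ∈ N, A_i = ∅}`. -/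
noncomputable def StdFormula.phiN0 {Agent AP : Type} (S : StdFormula Agent AP) :
    Formula Agent AP :=
  bigAnd (((List.finRange S.n).filter fun i => decide (S.A i = (∅ : Set Agent))).map S.φ)

/-- The atomic propositions that are conjuncts of a formula. -/
def posAtoms {Agent AP : Type} : Formula Agent AP → Set AP
  | .atom p => {p}
  | .and φ ψ => posAtoms φ ∪ posAtoms ψ
  | _ => ∅

/-- A general game form with outcome states indexed by `ι`. -/
structure GameForm (Agent ι : Type) : Type 1 where
  Action0 : Type
  action_nonempty : Nonempty Action0
  outcome_nonempty : Nonempty ι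
  av0 : (A : Set Agent) → Set (JA Agent Action0 A)
  out0 : (A : Set Agent) → JA Agent Action0 A → Set ι
  av0_restrict : ∀ A : Set Agent,
    av0 A = {σ | ∃ σG ∈ av0 Set.univ, JA.restrict (Set.subset_univ A) σG = σ}
  av0_out : ∀ σ : JA Agent Action0 (Set.univ : Set Agent),
    σ ∈ av0 Set.univ ↔ out0 Set.univ σ ≠ ∅
  out0_union : ∀ (A : Set Agent) (σ : JA Agent Action0 A),
    out0 A σ = {j | ∃ σG : JA Agent Action0 (Set.univ : Set Agent),
      JA.restrict (Set.subset_univ A) σG = σ ∧ j ∈ out0 Set.univ σG}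

/-- The model grafted from a family of pointed models `(Mi i, si i)`, an elementary
conjunction `γ`, and a general game form `F`.  The new state `s_0` is `none`; the states
of `Mi i` are embedded as `some ⟨i, ·⟩`; the actions of `F` and of the `Mi i` are kept
disjoint via a sum type. -/
noncomputable def grafted {Agent AP ι : Type}
    (Mi : ι → AMAM Agent AP) (si : (i : ι) → (Mi i).State)
    (γ : Formula Agent AP) (F : GameForm Agent ι) : AMAM Agent AP where
  State := Option ((i : ι) × (Mi i).State)
  Action := F.Action0 ⊕ ((i : ι) × (Mi i).Action)
  state_nonempty := ⟨none⟩
  action_nonempty := ⟨Sum.inl (Classical.choice F.action_nonempty)⟩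
  av := fun A s =>
    match s with
    | none => {σ | ∃ τ ∈ F.av0 A, σ = fun a ha => Sum.inl (τ a ha)}
    | some ⟨i, u⟩ => {σ | ∃ τ ∈ (Mi i).av A u, σ = fun a ha => Sum.inr ⟨i, τ a ha⟩}
  out := fun A s σ =>
    match s with
    | none => {t | ∃ τ : JA Agent F.Action0 A,
        (σ = fun a ha => Sum.inl (τ a ha)) ∧ ∃ j ∈ F.out0 A τ, t = some ⟨j, si j⟩}
    | some ⟨i, u⟩ => {t | ∃ τ : JA Agent (Mi i).Action A,
        (σ = fun a ha => Sum.inr ⟨i, τ a ha⟩) ∧ ∃ u' ∈ (Mi i).out A u τ, t = some ⟨i, u'⟩}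
  lab := fun s =>
    match s with
    | none => posAtoms γ
    | some ⟨i, u⟩ => (Mi i).lab u

section Aux15

variable {Agent AP : Type}

lemma sat_and' {M : AMAM Agent AP} {s : M.State} {φ ψ : Formula Agent AP} :
    Sat M s (φ.and ψ) ↔ Sat M s φ ∧ Sat M s ψ := Iff.rfl

lemma sat_neg' {M : AMAM Agent AP} {s : M.State} {φ : Formula Agent AP} :
    Sat M s φ.neg ↔ ¬ Sat M s φ := Iff.rfl

lemma sat_or' {M : AMAM Agent AP} {s : M.State} {φ ψ : Formula Agent AP} :
    Sat M s (φ.or ψ) ↔ Sat M s φ ∨ Sat M s ψ := by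
  simp only [Formula.or, sat_neg', sat_and']
  tauto

lemma sat_imp' {M : AMAM Agent AP} {s : M.State} {φ ψ : Formula Agent AP} :
    Sat M s (φ.imp ψ) ↔ (Sat M s φ → Sat M s ψ) := by
  simp only [Formula.imp, sat_or', sat_neg']
  tauto

lemma sat_bigAnd' {M : AMAM Agent AP} {s : M.State} :
    ∀ {l : List (Formula Agent AP)}, Sat M s (bigAnd l) ↔ ∀ φ ∈ l, Sat M s φ := by
  intro l
  induction l with
  | nil => simp [bigAnd, Sat]
  | cons φ t ih =>
    cases t with
    | nil => simp [bigAnd]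
    | cons ψ l' =>
      have he : bigAnd (φ :: ψ :: l') = φ.and (bigAnd (ψ :: l')) := rfl
      rw [he, sat_and', ih]
      simp

lemma sat_bigOr' {M : AMAM Agent AP} {s : M.State} :
    ∀ {l : List (Formula Agent AP)}, Sat M s (bigOr l) ↔ ∃ φ ∈ l, Sat M s φ := by
  intro l
  induction l with
  | nil => simp [bigOr, Formula.bot, Sat]
  | cons φ t ih =>
    cases t with
    | nil => simp [bigOr]
    | cons ψ l' =>
      have he : bigOr (φ :: ψ :: l') = φ.or (bigOr (ψ :: l')) := rfl
      rw [he, sat_or', ih]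
      simp

/-- Formulas of modal depth 0 only depend on the labelling. -/
lemma sat_depth0 {M M' : AMAM Agent AP} {s : M.State} {s' : M'.State}
    (hlab : M.lab s = M'.lab s') :
    ∀ {φ : Formula Agent AP}, φ.mdepth = 0 → (Sat M s φ ↔ Sat M' s' φ) := by
  intro φ
  induction φ with
  | top => intro _; exact Iff.rfl
  | atom p => intro _; show p ∈ M.lab s ↔ p ∈ M'.lab s'; rw [hlab]
  | neg φ ih => intro hd; exact not_congr (ih hd)
  | and φ ψ ihφ ihψ =>
    intro hd
    simp only [Formula.mdepth, Nat.max_eq_zero_iff] at hd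
    exact and_congr (ihφ hd.1) (ihψ hd.2)
  | coal A φ ih => intro hd; simp [Formula.mdepth] at hd

lemma IsLiteral.mdepth0 {φ : Formula Agent AP} (h : IsLiteral φ) : φ.mdepth = 0 := by
  cases h <;> rfl

lemma IsElemDisj.mdepth0 {φ : Formula Agent AP} (h : IsElemDisj φ) : φ.mdepth = 0 := by
  induction h with
  | bot => rfl
  | lit h => exact h.mdepth0
  | disj _ _ ih1 ih2 => simp [Formula.or, Formula.mdepth, ih1, ih2]

lemma restrict_univ_eq {Action : Type} (σ : JA Agent Action (Set.univ : Set Agent)) :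
    JA.restrict (Set.subset_univ Set.univ) σ = σ := rfl

/-- Characterisation of the coalition modality in a general concurrent game model. -/
lemma sat_coal_iff {M : AMAM Agent AP} (hG : IsGCGM M) (s : M.State)
    (A : Set Agent) (φ : Formula Agent AP) :
    Sat M s (.coal A φ) ↔ ∃ σG : JA Agent M.Action Set.univ,
      (M.out Set.univ s σG).Nonempty ∧
      ∀ σG' : JA Agent M.Action Set.univ,
        JA.restrict (Set.subset_univ A) σG' = JA.restrict (Set.subset_univ A) σG →
        ∀ t ∈ M.out Set.univ s σG', Sat M t φ := by
  constructor
  · rintro ⟨σA, hav, hout⟩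
    rw [hG.av_restrict] at hav
    obtain ⟨σG, hσG, rfl⟩ := hav
    rw [hG.av_grand] at hσG
    refine ⟨σG, Set.nonempty_iff_ne_empty.2 hσG, ?_⟩
    intro σG' hre t ht
    apply hout
    rw [hG.out_union]
    exact ⟨σG', hre, ht⟩
  · rintro ⟨σG, hne, hforall⟩
    refine ⟨JA.restrict (Set.subset_univ A) σG, ?_, ?_⟩
    · rw [hG.av_restrict]
      refine ⟨σG, ?_, rfl⟩
      rw [hG.av_grand]
      exact Set.nonempty_iff_ne_empty.1 hne
    · intro t ht
      rw [hG.out_union] at ht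
      obtain ⟨σG', hre, ht⟩ := ht
      exact hforall σG' hre t ht

/-- Build an abstract model from a "grand coalition outcome" function, with
availability and coalition outcomes derived canonically. -/
noncomputable abbrev mkM (State Action : Type) (hs : Nonempty State) (ha : Nonempty Action)
    (outU : State → JA Agent Action (Set.univ : Set Agent) → Set State)
    (lab : State → Set AP) : AMAM Agent AP where
  State := State
  Action := Action
  state_nonempty := hs
  action_nonempty := ha
  av := fun A s => {σ | ∃ σG, (outU s σG).Nonempty ∧ JA.restrict (Set.subset_univ A) σG = σ}
  out := fun A s σ => {t | ∃ σG, JA.restrict (Set.subset_univ A) σG = σ ∧ t ∈ outU s σG}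
  lab := lab

lemma mkM_out_univ {State Action : Type} (hs : Nonempty State) (ha : Nonempty Action)
    (outU : State → JA Agent Action (Set.univ : Set Agent) → Set State)
    (lab : State → Set AP) (s : State) (σ : JA Agent Action Set.univ) :
    (mkM (AP := AP) State Action hs ha outU lab).out Set.univ s σ = outU s σ := by
  ext t
  show (∃ σG, JA.restrict (Set.subset_univ Set.univ) σG = σ ∧ t ∈ outU s σG) ↔ _
  constructor
  · rintro ⟨σG, hre, ht⟩
    rw [restrict_univ_eq] at hre
    exact hre ▸ ht
  · intro ht
    exact ⟨σ, restrict_univ_eq σ, ht⟩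

lemma mkM_out_univ' {State Action : Type} (hs : Nonempty State) (ha : Nonempty Action)
    (outU : State → JA Agent Action (Set.univ : Set Agent) → Set State)
    (lab : State → Set AP) (s : State) (σ : JA Agent Action Set.univ) (t : State)
    (h : t ∈ (mkM (AP := AP) State Action hs ha outU lab).out Set.univ s σ) :
    t ∈ outU s σ := by rwa [mkM_out_univ] at h

lemma mkM_isGCGM {State Action : Type} (hs : Nonempty State) (ha : Nonempty Action)
    (outU : State → JA Agent Action (Set.univ : Set Agent) → Set State)
    (lab : State → Set AP) :
    IsGCGM (mkM (AP := AP) State Action hs ha outU lab) := by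
  have hav : ∀ (A : Set Agent) (s : State),
      (mkM (AP := AP) State Action hs ha outU lab).av A s =
      {σ | ∃ σG, (outU s σG).Nonempty ∧ JA.restrict (Set.subset_univ A) σG = σ} := fun _ _ => rfl
  have havU : ∀ (s : State) (σ : JA Agent Action Set.univ),
      σ ∈ (mkM (AP := AP) State Action hs ha outU lab).av Set.univ s ↔ (outU s σ).Nonempty := by
    intro s σ
    rw [hav]
    constructor
    · rintro ⟨σG, hne, hre⟩
      rw [restrict_univ_eq] at hre
      exact hre ▸ hne
    · intro hne
      exact ⟨σ, hne, restrict_univ_eq σ⟩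
  constructor
  · intro A s
    ext σ
    rw [hav]
    constructor
    · rintro ⟨σG, hne, hre⟩
      exact ⟨σG, (havU s σG).2 hne, hre⟩
    · rintro ⟨σG, hσG, hre⟩
      exact ⟨σG, (havU s σG).1 hσG, hre⟩
  · intro s
    ext σ
    rw [havU, Set.mem_setOf_eq, mkM_out_univ, ← Set.nonempty_iff_ne_empty]
  · intro A s σ
    ext t
    show (∃ σG, JA.restrict (Set.subset_univ A) σG = σ ∧ t ∈ outU s σG) ↔ _
    constructor
    · rintro ⟨σG, hre, ht⟩
      exact ⟨σG, hre, by rwa [mkM_out_univ]⟩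
    · rintro ⟨σG, hre, ht⟩
      exact ⟨σG, hre, by rwa [mkM_out_univ] at ht⟩

section Big15

variable {Agent AP : Type}

/-- The index set of relevant pairs `(i, j)` with `A_i ⊆ B_j`. -/
abbrev StdK (S : StdFormula Agent AP) : Type := {p : Fin S.n × Fin S.m // S.A p.1 ⊆ S.B p.2}

/-- States of the grafted model. -/
abbrev bigState (S : StdFormula Agent AP) (Mk : StdK S → AMAM Agent AP) : Type :=
  Option ((k : StdK S) × (Mk k).State)

/-- Actions of the grafted model: a vote (used at the root) together with an action
for each component model. -/
abbrev bigAct (S : StdFormula Agent AP) (Mk : StdK S → AMAM Agent AP) : Type :=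
  StdK S × ((k : StdK S) → (Mk k).Action)

/-- The set of result indices compatible with a grand joint action at the root. -/
abbrev RES (S : StdFormula Agent AP) (Mk : StdK S → AMAM Agent AP)
    (σ : JA Agent (bigAct S Mk) Set.univ) (k : StdK S) : Prop :=
  ∀ i' : Fin S.n, (S.A i').Nonempty →
    (∀ a ∈ S.A i', ((σ a (Set.mem_univ a)).1).1.1 = i') → k.1.1 = i'

/-- Grand-coalition outcome function of the grafted model. -/
noncomputable def bigOutU (S : StdFormula Agent AP) (Mk : StdK S → AMAM Agent AP)
    (sk : (k : StdK S) → (Mk k).State) :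
    bigState S Mk → JA Agent (bigAct S Mk) (Set.univ : Set Agent) → Set (bigState S Mk)
  | none, σ => {t | ∃ k : StdK S, RES S Mk σ k ∧ t = some ⟨k, sk k⟩}
  | some q, σ => {t | ∃ u' ∈ (Mk q.1).out Set.univ q.2 (fun a ha => (σ a ha).2 q.1),
      t = some ⟨q.1, u'⟩}

/-- The grafted model. -/
noncomputable abbrev bigM (S : StdFormula Agent AP) (Mk : StdK S → AMAM Agent AP)
    (sk : (k : StdK S) → (Mk k).State) (k0 : StdK S) (lab0 : Set AP) : AMAM Agent AP :=
  mkM (bigState S Mk) (bigAct S Mk) ⟨none⟩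
    ⟨⟨k0, fun k => Classical.choice (Mk k).action_nonempty⟩⟩
    (bigOutU S Mk sk)
    (fun s => match s with | none => lab0 | some q => (Mk q.1).lab q.2)

lemma bigM_isGCGM (S : StdFormula Agent AP) (Mk : StdK S → AMAM Agent AP)
    (sk : (k : StdK S) → (Mk k).State) (k0 : StdK S) (lab0 : Set AP) :
    IsGCGM (bigM S Mk sk k0 lab0) := mkM_isGCGM _ _ _ _

lemma bigM_out_univ (S : StdFormula Agent AP) (Mk : StdK S → AMAM Agent AP)
    (sk : (k : StdK S) → (Mk k).State) (k0 : StdK S) (lab0 : Set AP)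
    (s : bigState S Mk) (σ : JA Agent (bigAct S Mk) Set.univ) :
    (bigM S Mk sk k0 lab0).out Set.univ s σ = bigOutU S Mk sk s σ :=
  mkM_out_univ _ _ _ _ _ _

/-- Truth transfer between a component model and its copy in the grafted model. -/
lemma big_transfer (S : StdFormula Agent AP) (Mk : StdK S → AMAM Agent AP)
    (sk : (k : StdK S) → (Mk k).State) (k0 : StdK S) (lab0 : Set AP)
    (hGk : ∀ k, IsGCGM (Mk k)) (k : StdK S) :
    ∀ (φ : Formula Agent AP) (u : (Mk k).State),
      Sat (bigM S Mk sk k0 lab0) (some ⟨k, u⟩) φ ↔ Sat (Mk k) u φ := by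
  intro φ
  induction φ with
  | top => intro u; exact Iff.rfl
  | atom p => intro u; exact Iff.rfl
  | neg φ ih => intro u; exact not_congr (ih u)
  | and φ ψ ih1 ih2 => intro u; exact and_congr (ih1 u) (ih2 u)
  | coal A φ ih =>
    intro u
    rw [sat_coal_iff (bigM_isGCGM S Mk sk k0 lab0), sat_coal_iff (hGk k)]
    constructor
    · rintro ⟨σG, hne, hall⟩
      rw [bigM_out_univ] at hne
      obtain ⟨t, u1, hu1, rfl⟩ := hne
      refine ⟨fun a ha => (σG a ha).2 k, ⟨u1, hu1⟩, ?_⟩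
      intro τ' hre v hv
      set σG' : JA Agent (bigAct S Mk) Set.univ :=
        fun a ha => ((σG a ha).1, Function.update (σG a ha).2 k (τ' a ha)) with hσG'
      have hre' : JA.restrict (Set.subset_univ A) σG' = JA.restrict (Set.subset_univ A) σG := by
        funext a ha
        show σG' a _ = σG a _
        rw [hσG']
        have hτ : τ' a (Set.subset_univ A ha) = (σG a (Set.subset_univ A ha)).2 k :=
          congrFun (congrFun hre a) ha
        refine Prod.ext rfl ?_
        show Function.update (σG a _).2 k (τ' a _) = (σG a _).2
        rw [show (τ' a (Set.subset_univ A ha) : (Mk k).Action) =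
          (σG a (Set.subset_univ A ha)).2 k from hτ]
        exact Function.update_eq_self _ _
      have hproj : (fun a (ha : a ∈ (Set.univ : Set Agent)) => (σG' a ha).2 k) = τ' := by
        funext a ha
        rw [hσG']
        exact Function.update_self _ _ _
      have hmem : (some ⟨k, v⟩ : bigState S Mk) ∈
          (bigM S Mk sk k0 lab0).out Set.univ (some ⟨k, u⟩) σG' := by
        rw [bigM_out_univ]
        refine ⟨v, ?_, rfl⟩
        rw [show (fun a (ha : a ∈ (Set.univ : Set Agent)) => (σG' a ha).2 k) = τ' from hproj]
        exact hv
      have := hall σG' hre' _ hmem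
      exact (ih v).1 this
    · rintro ⟨τ, hne, hall⟩
      obtain ⟨u1, hu1⟩ := hne
      set σG : JA Agent (bigAct S Mk) Set.univ :=
        fun a ha => (k0, Function.update
          (fun k' => Classical.choice (Mk k').action_nonempty) k (τ a ha)) with hσG
      have hproj : (fun a (ha : a ∈ (Set.univ : Set Agent)) => (σG a ha).2 k) = τ := by
        funext a ha
        show Function.update
          (fun k' => Classical.choice (Mk k').action_nonempty) k (τ a ha) k = τ a ha
        exact Function.update_self _ _ _
      refine ⟨σG, ?_, ?_⟩
      · rw [bigM_out_univ]
        exact ⟨some ⟨k, u1⟩, u1, by rw [hproj]; exact hu1, rfl⟩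
      · intro σG' hre t ht
        rw [bigM_out_univ] at ht
        obtain ⟨u', hu', rfl⟩ := ht
        have hre2 : JA.restrict (Set.subset_univ A)
            (fun a (ha : a ∈ (Set.univ : Set Agent)) => (σG' a ha).2 k) =
            JA.restrict (Set.subset_univ A) τ := by
          funext a ha
          have hpt : σG' a (Set.subset_univ A ha) = σG a (Set.subset_univ A ha) :=
            congrFun (congrFun hre a) ha
          show (σG' a _).2 k = τ a _
          rw [hpt, ← hproj]
        have := hall _ hre2 u' hu'
        exact (ih u').2 this

lemma mem_bigOutU_none {Agent AP : Type} (S : StdFormula Agent AP)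
    (Mk : StdK S → AMAM Agent AP) (sk : (k : StdK S) → (Mk k).State)
    (σ : JA Agent (bigAct S Mk) Set.univ) (t : bigState S Mk) :
    t ∈ bigOutU S Mk sk none σ ↔ ∃ k : StdK S, RES S Mk σ k ∧ t = some ⟨k, sk k⟩ := Iff.rfl

lemma sat_phiN0_conj {Agent AP : Type} {M : AMAM Agent AP} {s : M.State}
    (S : StdFormula Agent AP) (i : Fin S.n) (hAe : S.A i = ∅)
    (hsat : Sat M s S.phiN0) : Sat M s (S.φ i) := by
  rw [StdFormula.phiN0, sat_bigAnd'] at hsat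
  apply hsat
  refine List.mem_map.2 ⟨i, List.mem_filter.2 ⟨List.mem_finRange i, ?_⟩, rfl⟩
  simp [decide_eq_true_eq, hAe]

end Big15

/-- downward validity lemma for standard formulas. -/
theorem stmt15 {Agent AP : Type} [Fintype Agent] [Nonempty Agent] [Countable AP]
    (S : StdFormula Agent AP) (h : MCLValid S.toFormula) :
    MCLValid S.γ ∨
    ∃ (i : Fin S.n) (j : Fin S.m), S.A i ⊆ S.B j ∧
      MCLValid ((S.phiN0.and (S.φ i)).imp (S.ψ j)) := by
  by_contra hcon
  push_neg at hcon
  obtain ⟨hγ, hij⟩ := hcon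
  unfold MCLValid at hγ
  push_neg at hγ
  obtain ⟨Mγ, hGγ, sγ, hsγ⟩ := hγ
  rcases Nat.eq_zero_or_pos S.n with hn | hn
  · -- n = 0 : use a one-state model with no transitions
    have hsat := h (mkM Unit Unit ⟨()⟩ ⟨()⟩ (fun _ _ => (∅ : Set Unit))
      (fun _ => Mγ.lab sγ)) (mkM_isGCGM _ _ _ _) ()
    unfold StdFormula.toFormula at hsat
    rw [sat_or'] at hsat
    rcases hsat with hg | himp
    · refine hsγ ((sat_depth0 ?_ S.hγ.mdepth0).1 hg)
      rfl
    · rw [sat_imp'] at himp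
      have hAnd : Sat (mkM Unit Unit ⟨()⟩ ⟨()⟩ (fun _ _ => (∅ : Set Unit))
          (fun _ => Mγ.lab sγ)) () (bigAnd (List.ofFn fun i => Formula.coal (S.A i) (S.φ i))) := by
        rw [sat_bigAnd']
        intro χ hχ
        rw [List.mem_ofFn] at hχ
        obtain ⟨i, rfl⟩ := hχ
        exact absurd i.isLt (by omega)
      have hOr := himp hAnd
      rw [sat_bigOr'] at hOr
      obtain ⟨χ, hχ, hsχ⟩ := hOr
      rw [List.mem_ofFn] at hχ
      obtain ⟨j, rfl⟩ := hχ
      rw [sat_coal_iff (mkM_isGCGM _ _ _ _)] at hsχ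
      obtain ⟨σG, hne, -⟩ := hsχ
      rw [mkM_out_univ] at hne
      simp at hne
  · -- n > 0 : the grafted-model construction
    obtain ⟨i0, hA0, hφ0⟩ := S.hN (by omega)
    obtain ⟨j0, hB0, hψ0⟩ := S.hP
    have hk0 : S.A ((i0, j0) : Fin S.n × Fin S.m).1 ⊆ S.B ((i0, j0) : Fin S.n × Fin S.m).2 := by
      rw [hA0]; exact Set.empty_subset _
    have HC : ∀ k : StdK S, ∃ M : AMAM Agent AP, ∃ _ : IsGCGM M, ∃ s : M.State,
        Sat M s S.phiN0 ∧ Sat M s (S.φ k.1.1) ∧ ¬ Sat M s (S.ψ k.1.2) := by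
      intro k
      have hk := hij k.1.1 k.1.2 k.2
      unfold MCLValid at hk
      push_neg at hk
      obtain ⟨M, hG, s, hs⟩ := hk
      rw [sat_imp'] at hs
      push_neg at hs
      obtain ⟨hpq, hnq⟩ := hs
      rw [sat_and'] at hpq
      exact ⟨M, hG, s, hpq.1, hpq.2, hnq⟩
    choose Mk hGk sk hN0 hφk hψk using HC
    have hGM := bigM_isGCGM S Mk sk ⟨(i0, j0), hk0⟩ (Mγ.lab sγ)
    have hsat := h (bigM S Mk sk ⟨(i0, j0), hk0⟩ (Mγ.lab sγ)) hGM none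
    unfold StdFormula.toFormula at hsat
    rw [sat_or'] at hsat
    rcases hsat with hg | himp
    · refine hsγ ((sat_depth0 ?_ S.hγ.mdepth0).1 hg)
      rfl
    · rw [sat_imp'] at himp
      have hAnd : Sat (bigM S Mk sk ⟨(i0, j0), hk0⟩ (Mγ.lab sγ)) none
          (bigAnd (List.ofFn fun i => Formula.coal (S.A i) (S.φ i))) := by
        rw [sat_bigAnd']
        intro χ hχ
        rw [List.mem_ofFn] at hχ
        obtain ⟨i, rfl⟩ := hχ
        rw [sat_coal_iff hGM]
        have hsubI : S.A ((i, j0) : Fin S.n × Fin S.m).1 ⊆ S.B ((i, j0) : Fin S.n × Fin S.m).2 := by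
          rw [hB0]; exact Set.subset_univ _
        refine ⟨fun _ _ => (⟨(i, j0), hsubI⟩,
          fun k' => Classical.choice (Mk k').action_nonempty), ?_, ?_⟩
        · erw [bigM_out_univ]
          refine ⟨some ⟨⟨(i, j0), hsubI⟩, sk ⟨(i, j0), hsubI⟩⟩, ⟨(i, j0), hsubI⟩, ?_, rfl⟩
          intro i' hne' huna
          obtain ⟨a, ha⟩ := hne'
          exact huna a ha
        · intro σG' hre t ht
          rw [bigM_out_univ, mem_bigOutU_none] at ht
          obtain ⟨k, hk, rfl⟩ := ht
          rw [big_transfer S Mk sk ⟨(i0, j0), hk0⟩ (Mγ.lab sγ) hGk k]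
          by_cases hAi : (S.A i).Nonempty
          · have hki : k.1.1 = i := by
              apply hk i hAi
              intro a ha
              have hpt : σG' a (Set.mem_univ a) = (fun _ _ => ((⟨(i, j0), hsubI⟩ : StdK S),
                  fun k' => Classical.choice (Mk k').action_nonempty)) a (Set.mem_univ a) :=
                congrFun (congrFun hre a) ha
              rw [hpt]
            have := hφk k
            rw [hki] at this
            exact this
          · exact sat_phiN0_conj S i (Set.not_nonempty_iff_eq_empty.1 hAi) (hN0 k)
      have hOr := himp hAnd
      rw [sat_bigOr'] at hOr
      obtain ⟨χ, hχ, hsχ⟩ := hOr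
      rw [List.mem_ofFn] at hχ
      obtain ⟨j, rfl⟩ := hχ
      rw [sat_coal_iff hGM] at hsχ
      obtain ⟨σG, hne, hall⟩ := hsχ
      rw [bigM_out_univ] at hne
      obtain ⟨t1, k1, hk1, rfl⟩ := hne
      obtain ⟨istar, hsubstar, hstar⟩ : ∃ istar : Fin S.n, S.A istar ⊆ S.B j ∧
          ∀ i' : Fin S.n, (S.A i').Nonempty → S.A i' ⊆ S.B j →
            (∀ a ∈ S.A i', ((σG a (Set.mem_univ a)).1).1.1 = i') → i' = istar := by
        by_cases hD : ∃ i' : Fin S.n, (S.A i').Nonempty ∧ S.A i' ⊆ S.B j ∧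
            ∀ a ∈ S.A i', ((σG a (Set.mem_univ a)).1).1.1 = i'
        · obtain ⟨iD, h1, h2, h3⟩ := hD
          refine ⟨iD, h2, ?_⟩
          intro i' h1' h2' h3'
          have e1 : k1.1.1 = i' := hk1 i' h1' h3'
          have e2 : k1.1.1 = iD := hk1 iD h1 h3
          rw [← e1, e2]
        · refine ⟨i0, by rw [hA0]; exact Set.empty_subset _, ?_⟩
          intro i' h1' h2' h3'
          exact absurd ⟨i', h1', h2', h3'⟩ hD
      have hsubK : S.A ((istar, j) : Fin S.n × Fin S.m).1 ⊆
          S.B ((istar, j) : Fin S.n × Fin S.m).2 := hsubstar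
      set σG' : JA Agent (bigAct S Mk) Set.univ := fun a ha =>
        if a ∈ S.B j then σG a ha else (⟨(istar, j), hsubK⟩, (σG a ha).2) with hσG'
      have hre : JA.restrict (Set.subset_univ (S.B j)) σG' =
          JA.restrict (Set.subset_univ (S.B j)) σG := by
        funext a ha
        show σG' a _ = σG a _
        simp only [hσG']
        rw [if_pos ha]
      have hkstar : RES S Mk σG' ⟨(istar, j), hsubK⟩ := by
        intro i' h1 h3
        show istar = i'
        by_cases hsubB : S.A i' ⊆ S.B j
        · have h3' : ∀ a ∈ S.A i', ((σG a (Set.mem_univ a)).1).1.1 = i' := by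
            intro a ha
            have hthis := h3 a ha
            have heq : σG' a (Set.mem_univ a) = σG a (Set.mem_univ a) := by
              simp only [hσG']
              rw [if_pos (hsubB ha)]
            rwa [heq] at hthis
          exact (hstar i' h1 hsubB h3').symm
        · obtain ⟨a, haA, haB⟩ := Set.not_subset.1 hsubB
          have hthis := h3 a haA
          have heq : σG' a (Set.mem_univ a) =
              (⟨(istar, j), hsubK⟩, (σG a (Set.mem_univ a)).2) := by
            simp only [hσG']
            rw [if_neg haB]
          rw [heq] at hthis
          exact hthis
      have hmem : (some ⟨⟨(istar, j), hsubK⟩, sk ⟨(istar, j), hsubK⟩⟩ : bigState S Mk) ∈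
          (bigM S Mk sk ⟨(i0, j0), hk0⟩ (Mγ.lab sγ)).out Set.univ none σG' := by
        rw [bigM_out_univ]
        exact ⟨⟨(istar, j), hsubK⟩, hkstar, rfl⟩
      have hψsat := hall σG' hre _ hmem
      rw [big_transfer S Mk sk ⟨(i0, j0), hk0⟩ (Mγ.lab sγ) hGk] at hψsat
      exact hψk ⟨(istar, j), hsubK⟩ hψsat
end Aux15
end

section
/- Upward derivability lemma for standard formulas: let γ ∨ (⋀_{i∈N} ⟨A_i⟩φ_i → ⋁_{j∈P} ⟨B_j⟩ψ_j) be a standard formula, and assume that at least one of the following holds: (a) ⊢_MCL γ; (b) there exist i ∈ N and j ∈ P such that A_i ⊆ B_j and ⊢_MCL (φ_{N0} ∧ φ_i) → ψ_j, where N0 = {i ∈ N | A_i = ∅} and φ_{N0} = ⋀{φ_i | i ∈ N0}. Then ⊢_MCL γ ∨ (⋀_{i∈N} ⟨A_i⟩φ_i → ⋁_{j∈P} ⟨B_j⟩ψ_j). -/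
open scoped Classical

section Aux

variable {Agent AP : Type}

@[simp] lemma propEval_neg (v : Formula Agent AP → Bool) (φ : Formula Agent AP) :
    propEval v φ.neg = !(propEval v φ) := rfl

@[simp] lemma propEval_and (v : Formula Agent AP → Bool) (φ ψ : Formula Agent AP) :
    propEval v (φ.and ψ) = (propEval v φ && propEval v ψ) := rfl

@[simp] lemma propEval_top (v : Formula Agent AP → Bool) :
    propEval v (Formula.top : Formula Agent AP) = true := rfl

@[simp] lemma propEval_or (v : Formula Agent AP → Bool) (φ ψ : Formula Agent AP) :
    propEval v (φ.or ψ) = (propEval v φ || propEval v ψ) := by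
  simp [Formula.or]

@[simp] lemma propEval_imp (v : Formula Agent AP → Bool) (φ ψ : Formula Agent AP) :
    propEval v (φ.imp ψ) = (!propEval v φ || propEval v ψ) := by
  simp [Formula.imp]

lemma propEval_bigAnd (v : Formula Agent AP → Bool) :
    ∀ l : List (Formula Agent AP), propEval v (bigAnd l) = l.all (propEval v)
  | [] => by simp [bigAnd]
  | [x] => by simp [bigAnd]
  | x :: y :: l => by
    have := propEval_bigAnd v (y :: l)
    simp [bigAnd, this]

lemma propEval_bigOr (v : Formula Agent AP → Bool) :
    ∀ l : List (Formula Agent AP), propEval v (bigOr l) = l.any (propEval v)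
  | [] => by simp [bigOr, Formula.bot]
  | [x] => by simp [bigOr]
  | x :: y :: l => by
    have := propEval_bigOr v (y :: l)
    simp [bigOr, this]

lemma mcl_mp1 {φ ψ : Formula Agent AP} (h : MCLProv φ) (t : Tautology (φ.imp ψ)) :
    MCLProv ψ := MCLProv.mp (MCLProv.tau t) h

lemma mcl_mp2 {φ1 φ2 ψ : Formula Agent AP} (h1 : MCLProv φ1) (h2 : MCLProv φ2)
    (t : Tautology (φ1.imp (φ2.imp ψ))) : MCLProv ψ :=
  MCLProv.mp (MCLProv.mp (MCLProv.tau t) h1) h2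

lemma Dof {C φ : Formula Agent AP} (h : MCLProv φ) : MCLProv (C.imp φ) := by
  refine mcl_mp1 h ?_
  intro v
  cases h1 : propEval v φ <;> cases h2 : propEval v C <;> simp [h1, h2]

lemma Dmp {C φ ψ : Formula Agent AP} (h1 : MCLProv (C.imp (φ.imp ψ)))
    (h2 : MCLProv (C.imp φ)) : MCLProv (C.imp ψ) := by
  refine mcl_mp2 h1 h2 ?_
  intro v
  cases hc : propEval v C <;> cases ha : propEval v φ <;> cases hb : propEval v ψ <;>
    simp [hc, ha, hb]

lemma taut_mem_bigAnd {l : List (Formula Agent AP)} {x : Formula Agent AP} (hx : x ∈ l) :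
    Tautology ((bigAnd l).imp x) := by
  intro v
  simp only [propEval_imp, propEval_bigAnd, Bool.or_eq_true, Bool.not_eq_true']
  cases h : l.all (propEval v)
  · exact Or.inl rfl
  · exact Or.inr (List.all_eq_true.mp h x hx)

/-- Derived rule: from `⊢ χ` and `C → ⟨∅⟩⊤`, derive `C → ⟨∅⟩χ`. -/
lemma Dcn {C χ : Formula Agent AP} (h : MCLProv χ)
    (hTop : MCLProv (C.imp (Formula.coal (∅ : Set Agent) Formula.top))) :
    MCLProv (C.imp (Formula.coal (∅ : Set Agent) χ)) :=
  Dmp (Dof (MCLProv.cn (∅ : Set Agent) Formula.top h)) hTop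

/-- `C → ⟨∅⟩α` and `C → ⟨A⟩β` give `C → ⟨A⟩(α ∧ β)`. -/
lemma Dpair {C : Formula Agent AP} (A : Set Agent) {α β : Formula Agent AP}
    (hTop : MCLProv (C.imp (Formula.coal (∅ : Set Agent) Formula.top)))
    (h1 : MCLProv (C.imp (Formula.coal (∅ : Set Agent) α)))
    (h2 : MCLProv (C.imp (Formula.coal A β))) :
    MCLProv (C.imp (Formula.coal A (α.and β))) := by
  have t0 : MCLProv (α.imp (β.imp (α.and β))) := by
    refine MCLProv.tau ?_
    intro v
    cases ha : propEval v α <;> cases hb : propEval v β <;> simp [ha, hb]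
  have hχ := Dcn t0 hTop
  have hstep : MCLProv (C.imp (Formula.coal (∅ : Set Agent) (β.imp (α.and β)))) :=
    Dmp (Dmp (Dof (MCLProv.mg (∅ : Set Agent) α (β.imp (α.and β)))) hχ) h1
  exact Dmp (Dmp (Dof (MCLProv.mg A β (α.and β))) hstep) h2

lemma D_bigAnd_nil {C : Formula Agent AP}
    (hTop : MCLProv (C.imp (Formula.coal (∅ : Set Agent) Formula.top))) :
    ∀ l : List (Formula Agent AP),
      (∀ x ∈ l, MCLProv (C.imp (Formula.coal (∅ : Set Agent) x))) →
      MCLProv (C.imp (Formula.coal (∅ : Set Agent) (bigAnd l)))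
  | [], _ => by simpa [bigAnd] using hTop
  | [x], hl => by simpa [bigAnd] using hl x (by simp)
  | x :: y :: l, hl => by
    have ih := D_bigAnd_nil hTop (y :: l) (fun z hz => hl z (List.mem_cons_of_mem x hz))
    have hx := hl x (List.mem_cons_self)
    have : bigAnd (x :: y :: l) = x.and (bigAnd (y :: l)) := rfl
    rw [this]
    exact Dpair (∅ : Set Agent) hTop hx ih

end Aux

/-- upward derivability lemma for standard formulas. -/
theorem stmt16 {Agent AP : Type} [Fintype Agent] [Nonempty Agent] [Countable AP]
    (S : StdFormula Agent AP)
    (h : MCLProv S.γ ∨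
      ∃ (i : Fin S.n) (j : Fin S.m), S.A i ⊆ S.B j ∧
        MCLProv ((S.phiN0.and (S.φ i)).imp (S.ψ j))) :
    MCLProv S.toFormula := by
  set C : Formula Agent AP :=
    bigAnd (List.ofFn fun i => Formula.coal (S.A i) (S.φ i)) with hC
  set lψ : List (Formula Agent AP) :=
    List.ofFn (fun j => Formula.coal (S.B j) (S.ψ j)) with hlψ
  have htf : S.toFormula = S.γ.or (C.imp (bigOr lψ)) := rfl
  rcases h with hγ | ⟨i, j, hAB, hprov⟩
  · rw [htf]
    refine mcl_mp1 hγ ?_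
    intro v
    cases hg : propEval v S.γ <;> simp [hg]
  -- case (b)
  · -- extraction of conjuncts of C
    have hext : ∀ k : Fin S.n, MCLProv (C.imp (Formula.coal (S.A k) (S.φ k))) := by
      intro k
      refine MCLProv.tau (taut_mem_bigAnd ?_)
      exact List.mem_ofFn.mpr ⟨k, rfl⟩
    -- C → ⟨∅⟩⊤
    have hn : S.n ≠ 0 := Fin.pos_iff_nonempty.mpr ⟨i⟩ |>.ne'
    obtain ⟨i0, hA0, hφ0⟩ := S.hN hn
    have hTop : MCLProv (C.imp (Formula.coal (∅ : Set Agent) Formula.top)) := by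
      have := hext i0; rwa [hA0, hφ0] at this
    -- C → ⟨∅⟩φ_{N0}
    have hN0 : MCLProv (C.imp (Formula.coal (∅ : Set Agent) S.phiN0)) := by
      refine D_bigAnd_nil hTop _ ?_
      intro x hx
      rcases List.mem_map.mp hx with ⟨k, hk, rfl⟩
      have hkA : S.A k = (∅ : Set Agent) := by
        have := (List.mem_filter.mp hk).2
        exact of_decide_eq_true this
      have := hext k; rwa [hkA] at this
    -- C → ⟨A i⟩(φ_{N0} ∧ φ i)
    have hpair : MCLProv (C.imp (Formula.coal (S.A i) (S.phiN0.and (S.φ i)))) :=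
      Dpair _ hTop hN0 (hext i)
    -- C → ⟨A i⟩ψ j
    have hψA : MCLProv (C.imp (Formula.coal (S.A i) (S.ψ j))) :=
      Dmp (Dmp (Dof (MCLProv.mg (S.A i) _ _)) (Dcn hprov hTop)) hpair
    -- C → ⟨B j⟩ψ j
    have hψB : MCLProv (C.imp (Formula.coal (S.B j) (S.ψ j))) :=
      Dmp (Dof (MCLProv.mc hAB _)) hψA
    -- glue
    have hmem : Formula.coal (S.B j) (S.ψ j) ∈ lψ := List.mem_ofFn.mpr ⟨j, rfl⟩
    rw [htf]
    refine mcl_mp1 hψB ?_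
    intro v
    by_cases hc : propEval v C = true
    · by_cases hx : propEval v (Formula.coal (S.B j) (S.ψ j)) = true
      · have hany : lψ.any (propEval v) = true := List.any_eq_true.mpr ⟨_, hmem, hx⟩
        simp [hc, hx, propEval_bigOr, hany]
      · simp [hc, hx]
    · simp [hc]
end

section
/- Completeness of MCL: for every formula φ of the language Φ, if φ is MCL-valid (true at every state of every general concurrent game model), then φ is derivable in the axiomatic system for MCL. -/
open scoped Classical

namespace MCLC

variable {Agent AP : Type}

/-! ### Propositional evaluation lemmas -/

lemma propEval_neg (v : Formula Agent AP → Bool) (a : Formula Agent AP) :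
    propEval v a.neg = !propEval v a := rfl

lemma propEval_imp (v : Formula Agent AP → Bool) (a b : Formula Agent AP) :
    propEval v (a.imp b) = (!propEval v a || propEval v b) := by
  cases ha : propEval v a <;> cases hb : propEval v b <;>
    simp [Formula.imp, Formula.or, propEval, ha, hb]

lemma propEval_bot (v : Formula Agent AP → Bool) :
    propEval v (Formula.bot : Formula Agent AP) = false := rfl

lemma propEval_top (v : Formula Agent AP → Bool) :
    propEval v (Formula.top : Formula Agent AP) = true := rfl

lemma propEval_and (v : Formula Agent AP → Bool) (a b : Formula Agent AP) :
    propEval v (a.and b) = (propEval v a && propEval v b) := rfl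

section Tauts
variable (a b c d : Formula Agent AP)

lemma taut_self : Tautology (a.imp a) := by
  intro v; simp only [propEval_imp]; cases propEval v a <;> rfl

lemma taut_k1 : Tautology (a.imp (b.imp a)) := by
  intro v; simp only [propEval_imp]
  cases propEval v a <;> cases propEval v b <;> rfl

lemma taut_dist4 :
    Tautology ((a.imp (b.imp c)).imp ((d.imp a).imp ((d.imp b).imp (d.imp c)))) := by
  intro v; simp only [propEval_imp]
  cases propEval v a <;> cases propEval v b <;> cases propEval v c <;>
    cases propEval v d <;> rfl

lemma taut_swap : Tautology ((a.imp (b.imp c)).imp (b.imp (a.imp c))) := by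
  intro v; simp only [propEval_imp]
  cases propEval v a <;> cases propEval v b <;> cases propEval v c <;> rfl

lemma taut_mono : Tautology ((a.imp b).imp ((c.imp a).imp (c.imp b))) := by
  intro v; simp only [propEval_imp]
  cases propEval v a <;> cases propEval v b <;> cases propEval v c <;> rfl

lemma taut_trans : Tautology ((a.imp b).imp ((b.imp c).imp (a.imp c))) := by
  intro v; simp only [propEval_imp]
  cases propEval v a <;> cases propEval v b <;> cases propEval v c <;> rfl

lemma taut_trans2 : Tautology ((a.imp b).imp ((b.imp (a.imp c)).imp (a.imp c))) := by
  intro v; simp only [propEval_imp]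
  cases propEval v a <;> cases propEval v b <;> cases propEval v c <;> rfl

lemma taut_negE : Tautology (a.imp (a.neg.imp b)) := by
  intro v; simp only [propEval_imp, propEval_neg]
  cases propEval v a <;> cases propEval v b <;> rfl

lemma taut_negE' : Tautology (a.neg.imp (a.imp b)) := by
  intro v; simp only [propEval_imp, propEval_neg]
  cases propEval v a <;> cases propEval v b <;> rfl

lemma taut_dne : Tautology ((a.neg.imp Formula.bot).imp a) := by
  intro v; simp only [propEval_imp, propEval_neg, propEval_bot]
  cases propEval v a <;> rfl

lemma taut_split :
    Tautology ((a.imp Formula.bot).imp ((a.neg.imp Formula.bot).imp Formula.bot)) := by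
  intro v; simp only [propEval_imp, propEval_neg, propEval_bot]
  cases propEval v a <;> rfl

lemma taut_negi : Tautology ((a.imp (b.neg.imp Formula.bot)).imp (a.imp b)) := by
  intro v; simp only [propEval_imp, propEval_neg, propEval_bot]
  cases propEval v a <;> cases propEval v b <;> rfl

lemma taut_top : Tautology (Formula.top : Formula Agent AP) := by
  intro v; rfl

lemma taut_and1 : Tautology ((a.and b).imp a) := by
  intro v; simp only [propEval_imp, propEval_and]
  cases propEval v a <;> cases propEval v b <;> rfl

lemma taut_and2 : Tautology ((a.and b).imp b) := by
  intro v; simp only [propEval_imp, propEval_and]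
  cases propEval v a <;> cases propEval v b <;> rfl

lemma taut_andI : Tautology (a.imp (b.imp (a.and b))) := by
  intro v; simp only [propEval_imp, propEval_and]
  cases propEval v a <;> cases propEval v b <;> rfl

end Tauts

/-! ### Derived provability machinery -/

section Prov
variable {a b c x y χ ψ : Formula Agent AP}

lemma imp_trans (h1 : MCLProv (a.imp b)) (h2 : MCLProv (b.imp c)) :
    MCLProv (a.imp c) :=
  ((MCLProv.tau (taut_trans a b c)).mp h1).mp h2

lemma imp_mono_right (h : MCLProv (a.imp b)) (c : Formula Agent AP) :
    MCLProv ((c.imp a).imp (c.imp b)) :=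
  (MCLProv.tau (taut_mono a b c)).mp h

lemma prov_foldr (h : MCLProv y) (l : List (Formula Agent AP)) :
    MCLProv (l.foldr Formula.imp y) := by
  induction l with
  | nil => exact h
  | cons a t ih => exact (MCLProv.tau (taut_k1 _ a)).mp ih

lemma self_imp_foldr (x : Formula Agent AP) (l : List (Formula Agent AP)) :
    MCLProv (x.imp (l.foldr Formula.imp x)) := by
  induction l with
  | nil => exact MCLProv.tau (taut_self x)
  | cons a t ih => exact imp_trans ih (MCLProv.tau (taut_k1 _ a))

lemma ded_mem {L : List (Formula Agent AP)} (h : ψ ∈ L) :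
    MCLProv (L.foldr Formula.imp ψ) := by
  induction L with
  | nil => cases h
  | cons a t ih =>
    rcases List.mem_cons.mp h with rfl | h'
    · exact self_imp_foldr ψ t
    · exact (MCLProv.tau (taut_k1 _ a)).mp (ih h')

lemma foldr_K (l : List (Formula Agent AP)) (a b : Formula Agent AP) :
    MCLProv ((l.foldr Formula.imp (a.imp b)).imp
      ((l.foldr Formula.imp a).imp (l.foldr Formula.imp b))) := by
  induction l with
  | nil => exact MCLProv.tau (taut_self _)
  | cons c t ih => exact (MCLProv.tau (taut_dist4 _ _ _ c)).mp ih

lemma ded_mp {L : List (Formula Agent AP)}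
    (h1 : MCLProv (L.foldr Formula.imp (a.imp b)))
    (h2 : MCLProv (L.foldr Formula.imp a)) :
    MCLProv (L.foldr Formula.imp b) :=
  ((foldr_K L a b).mp h1).mp h2

lemma ded_foldr {L t : List (Formula Agent AP)}
    (h : MCLProv (L.foldr Formula.imp (t.foldr Formula.imp χ)))
    (ht : ∀ b ∈ t, MCLProv (L.foldr Formula.imp b)) :
    MCLProv (L.foldr Formula.imp χ) := by
  induction t with
  | nil => exact h
  | cons b t' ih =>
    exact ih (ded_mp h (ht b (List.mem_cons_self))) fun x hx => ht x (List.mem_cons_of_mem _ hx)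

lemma foldr_subset {l L : List (Formula Agent AP)} (hsub : ∀ x ∈ l, x ∈ L)
    (h : MCLProv (l.foldr Formula.imp χ)) :
    MCLProv (L.foldr Formula.imp χ) :=
  ded_foldr (prov_foldr h L) fun x hx => ded_mem (hsub x hx)

lemma foldr_imp_of_imp (h : MCLProv (x.imp y)) (l : List (Formula Agent AP)) :
    MCLProv ((l.foldr Formula.imp x).imp (l.foldr Formula.imp y)) := by
  induction l with
  | nil => exact h
  | cons a t ih => exact imp_mono_right ih a

lemma foldr_swap_int (l : List (Formula Agent AP)) (a c : Formula Agent AP) :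
    MCLProv ((a.imp (l.foldr Formula.imp c)).imp (l.foldr Formula.imp (a.imp c))) := by
  induction l with
  | nil => exact MCLProv.tau (taut_self _)
  | cons b t ih =>
    exact imp_trans (MCLProv.tau (taut_swap a b _)) (imp_mono_right ih b)

lemma foldr_swap {l : List (Formula Agent AP)}
    (h : MCLProv (a.imp (l.foldr Formula.imp c))) :
    MCLProv (l.foldr Formula.imp (a.imp c)) :=
  (foldr_swap_int l a c).mp h

/-- Derived monotonicity rule (RM). -/
lemma prov_rm (A : Set Agent) (h : MCLProv (x.imp y)) :
    MCLProv ((Formula.coal A x).imp (Formula.coal A y)) := by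
  have h1 : MCLProv ((Formula.coal A x).imp (Formula.coal ∅ (x.imp y))) :=
    MCLProv.cn A x h
  have h2 := MCLProv.mg A x y
  exact ((MCLProv.tau (taut_trans2 _ _ _)).mp h1).mp h2

end Prov

end MCLC
namespace MCLC

variable {Agent AP : Type}

/-! ### Syntactic consequence, consistency, maximal consistent sets -/

def SProv (X : Set (Formula Agent AP)) (φ : Formula Agent AP) : Prop :=
  ∃ l : List (Formula Agent AP), (∀ ψ ∈ l, ψ ∈ X) ∧ MCLProv (l.foldr Formula.imp φ)

def Consistent (X : Set (Formula Agent AP)) : Prop := ¬ SProv X Formula.bot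

def IsMCS (Γ : Set (Formula Agent AP)) : Prop :=
  Consistent Γ ∧ ∀ φ : Formula Agent AP, φ ∈ Γ ∨ φ.neg ∈ Γ

section SProvLemmas
variable {X Y : Set (Formula Agent AP)} {φ ψ a : Formula Agent AP}

lemma sprov_of_prov (h : MCLProv φ) : SProv X φ := ⟨[], by simp, h⟩

lemma sprov_mem (h : φ ∈ X) : SProv X φ :=
  ⟨[φ], by simpa using h, MCLProv.tau (taut_self φ)⟩

lemma sprov_mono (hXY : X ⊆ Y) (h : SProv X φ) : SProv Y φ := by
  obtain ⟨l, hl, hp⟩ := h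
  exact ⟨l, fun ψ hψ => hXY (hl ψ hψ), hp⟩

lemma sprov_mp (h1 : SProv X (φ.imp ψ)) (h2 : SProv X φ) : SProv X ψ := by
  obtain ⟨l1, hl1, hp1⟩ := h1
  obtain ⟨l2, hl2, hp2⟩ := h2
  refine ⟨l1 ++ l2, ?_, ?_⟩
  · intro x hx; rcases List.mem_append.mp hx with h | h
    · exact hl1 x h
    · exact hl2 x h
  · exact ded_mp (foldr_subset (fun x hx => List.mem_append.mpr (Or.inl hx)) hp1)
      (foldr_subset (fun x hx => List.mem_append.mpr (Or.inr hx)) hp2)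

lemma sprov_extract (h : SProv (X ∪ {a}) φ) : SProv X (a.imp φ) := by
  classical
  obtain ⟨l, hl, hp⟩ := h
  set lX : List (Formula Agent AP) := l.filter (fun b => decide (b ∈ X)) with hlX
  have hsub : ∀ x ∈ l, x ∈ a :: lX := by
    intro x hx
    rcases hl x hx with hxX | hxa
    · exact List.mem_cons_of_mem _ (List.mem_filter.mpr ⟨hx, by simpa using hxX⟩)
    · simp only [Set.mem_singleton_iff] at hxa
      exact hxa ▸ List.mem_cons_self
  have h1 : MCLProv ((a :: lX).foldr Formula.imp φ) := foldr_subset hsub hp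
  refine ⟨lX, ?_, foldr_swap h1⟩
  intro x hx
  have := List.mem_filter.mp hx
  simpa using this.2

end SProvLemmas

section MCSLemmas
variable {Γ : Set (Formula Agent AP)} {φ ψ : Formula Agent AP}

lemma mcs_mem_of_sprov (hΓ : IsMCS Γ) (h : SProv Γ φ) : φ ∈ Γ := by
  rcases hΓ.2 φ with hm | hm
  · exact hm
  · exact absurd
      (sprov_mp (sprov_mp (sprov_of_prov (MCLProv.tau (taut_negE φ Formula.bot))) h)
        (sprov_mem hm)) hΓ.1

lemma mcs_thm (hΓ : IsMCS Γ) (h : MCLProv φ) : φ ∈ Γ :=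
  mcs_mem_of_sprov hΓ (sprov_of_prov h)

lemma mcs_mp (hΓ : IsMCS Γ) (h1 : φ.imp ψ ∈ Γ) (h2 : φ ∈ Γ) : ψ ∈ Γ :=
  mcs_mem_of_sprov hΓ (sprov_mp (sprov_mem h1) (sprov_mem h2))

lemma mcs_not_neg (hΓ : IsMCS Γ) (h : φ ∈ Γ) : φ.neg ∉ Γ := by
  intro hn
  exact hΓ.1 (sprov_mp (sprov_mp (sprov_of_prov (MCLProv.tau (taut_negE φ Formula.bot)))
    (sprov_mem h)) (sprov_mem hn))

lemma mcs_neg_iff (hΓ : IsMCS Γ) : φ.neg ∈ Γ ↔ φ ∉ Γ := by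
  constructor
  · intro hn hm; exact mcs_not_neg hΓ hm hn
  · intro hm; exact (hΓ.2 φ).resolve_left hm

lemma mcs_and_iff (hΓ : IsMCS Γ) : φ.and ψ ∈ Γ ↔ φ ∈ Γ ∧ ψ ∈ Γ := by
  constructor
  · intro h
    exact ⟨mcs_mp hΓ (mcs_thm hΓ (MCLProv.tau (taut_and1 φ ψ))) h,
      mcs_mp hΓ (mcs_thm hΓ (MCLProv.tau (taut_and2 φ ψ))) h⟩
  · rintro ⟨h1, h2⟩
    exact mcs_mp hΓ (mcs_mp hΓ (mcs_thm hΓ (MCLProv.tau (taut_andI φ ψ))) h1) h2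

end MCSLemmas

/-! ### Lindenbaum's lemma -/

lemma chain_list {c : Set (Set (Formula Agent AP))} (hc : IsChain (· ⊆ ·) c)
    (hne : c.Nonempty) (l : List (Formula Agent AP))
    (hl : ∀ x ∈ l, x ∈ ⋃₀ c) : ∃ Y ∈ c, ∀ x ∈ l, x ∈ Y := by
  induction l with
  | nil => exact ⟨hne.choose, hne.choose_spec, by simp⟩
  | cons a t ih =>
    obtain ⟨Y, hY, hYt⟩ := ih fun x hx => hl x (List.mem_cons_of_mem _ hx)
    obtain ⟨Z, hZ, haZ⟩ := hl a List.mem_cons_self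
    rcases eq_or_ne Y Z with rfl | hne'
    · exact ⟨Y, hY, by intro x hx; rcases List.mem_cons.mp hx with rfl | h
                       exacts [haZ, hYt x h]⟩
    rcases hc hY hZ hne' with hYZ | hZY
    · exact ⟨Z, hZ, by intro x hx; rcases List.mem_cons.mp hx with rfl | h
                       exacts [haZ, hYZ (hYt x h)]⟩
    · exact ⟨Y, hY, by intro x hx; rcases List.mem_cons.mp hx with rfl | h
                       exacts [hZY haZ, hYt x h]⟩

lemma lindenbaum {X : Set (Formula Agent AP)} (hX : Consistent X) :
    ∃ Γ, X ⊆ Γ ∧ IsMCS Γ := by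
  obtain ⟨m, hsub, hmax⟩ := zorn_subset_nonempty
    {Y : Set (Formula Agent AP) | Consistent Y}
    (fun c hcS hchain hcne => by
      refine ⟨⋃₀ c, ?_, fun Y hY => Set.subset_sUnion_of_mem hY⟩
      intro ⟨l, hl, hp⟩
      obtain ⟨Y, hYc, hall⟩ := chain_list hchain hcne l hl
      exact hcS hYc ⟨l, hall, hp⟩) X hX
  have hm : Consistent m := hmax.prop
  refine ⟨m, hsub, hm, fun φ => ?_⟩
  by_contra hcon
  push_neg at hcon
  obtain ⟨h1, h2⟩ := hcon
  have key : ∀ ψ : Formula Agent AP, ψ ∉ m → SProv m (ψ.imp Formula.bot) := by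
    intro ψ hψ
    have : ¬ Consistent (m ∪ {ψ}) := by
      intro hcons
      have := hmax.eq_of_subset hcons Set.subset_union_left
      exact hψ (this ▸ Set.mem_union_right _ rfl)
    have hb : SProv (m ∪ {ψ}) Formula.bot := by
      by_contra hnb; exact this hnb
    exact sprov_extract hb
  exact hm (sprov_mp (sprov_mp (sprov_of_prov (MCLProv.tau (taut_split φ)))
    (key φ h1)) (key φ.neg h2))

end MCLC
namespace MCLC

variable {Agent AP : Type}

/-! ### The canonical general concurrent game model -/

/-- Maximal consistent sets as a type. -/
def MCSet (Agent AP : Type) := {Γ : Set (Formula Agent AP) // IsMCS Γ}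

/-- `Λ(Γ) = {φ | ⟨∅⟩φ ∈ Γ}`. -/
def Lam (Γ : Set (Formula Agent AP)) : Set (Formula Agent AP) :=
  {φ | Formula.coal ∅ φ ∈ Γ}

/-- The goals "triggered" by a grand joint action at `Γ`: formulas `ψ` such that some
nonempty coalition `B` with `⟨B⟩ψ ∈ Γ` unanimously votes `ψ`. -/
def Trig (Γ : Set (Formula Agent AP))
    (σG : JA Agent (Option (Formula Agent AP)) (Set.univ : Set Agent)) :
    Set (Formula Agent AP) :=
  {ψ | ∃ B : Set Agent, B.Nonempty ∧ Formula.coal B ψ ∈ Γ ∧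
        ∀ a (_ : a ∈ B), σG a (Set.mem_univ a) = some ψ}

/-- Grand outcome function of the canonical model. -/
noncomputable def OutU (Γ : MCSet Agent AP)
    (σG : JA Agent (Option (Formula Agent AP)) (Set.univ : Set Agent)) :
    Set (MCSet Agent AP) :=
  if Formula.coal (∅ : Set Agent) Formula.top ∈ Γ.1 ∧ (Trig Γ.1 σG).Subsingleton
  then {Δ | Lam Γ.1 ⊆ Δ.1 ∧ Trig Γ.1 σG ⊆ Δ.1} else ∅

lemma outU_cond {Γ : MCSet Agent AP} {σG} (h : OutU Γ σG ≠ ∅) :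
    Formula.coal (∅ : Set Agent) Formula.top ∈ Γ.1 ∧ (Trig Γ.1 σG).Subsingleton := by
  by_contra hc
  exact h (by simp [OutU, if_neg hc])

lemma outU_mem {Γ Δ : MCSet Agent AP} {σG} (h : Δ ∈ OutU Γ σG) :
    Lam Γ.1 ⊆ Δ.1 ∧ Trig Γ.1 σG ⊆ Δ.1 := by
  by_cases hc : Formula.coal (∅ : Set Agent) Formula.top ∈ Γ.1 ∧ (Trig Γ.1 σG).Subsingleton
  · simpa [OutU, if_pos hc] using h
  · simp [OutU, if_neg hc] at h

/-- The canonical model. -/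
noncomputable def canM (hne : Nonempty (MCSet Agent AP)) : AMAM Agent AP where
  State := MCSet Agent AP
  Action := Option (Formula Agent AP)
  state_nonempty := hne
  action_nonempty := ⟨none⟩
  av := fun A s => {σ | ∃ σG, OutU s σG ≠ ∅ ∧ JA.restrict (Set.subset_univ A) σG = σ}
  out := fun A s σ => {t | ∃ σG, JA.restrict (Set.subset_univ A) σG = σ ∧ t ∈ OutU s σG}
  lab := fun s => {p | Formula.atom p ∈ s.1}

lemma restrict_univ {Act : Type} (σ : JA Agent Act (Set.univ : Set Agent)) :
    JA.restrict (Set.subset_univ Set.univ) σ = σ := rfl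

variable (hne : Nonempty (MCSet Agent AP))

lemma canM_out_univ (s : MCSet Agent AP) (σG) :
    (canM hne).out Set.univ s σG = OutU s σG := by
  ext t
  constructor
  · rintro ⟨σG', h1, h2⟩
    rw [restrict_univ] at h1
    exact h1 ▸ h2
  · intro ht
    exact ⟨σG, restrict_univ σG, ht⟩

lemma canM_av_univ (s : MCSet Agent AP) :
    (canM hne).av Set.univ s = {σ | OutU s σ ≠ ∅} := by
  ext σ
  constructor
  · rintro ⟨σG, h1, h2⟩
    rw [restrict_univ] at h2
    exact h2 ▸ h1
  · intro hσ
    exact ⟨σ, hσ, restrict_univ σ⟩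

lemma canM_gcgm : IsGCGM (canM hne) := by
  constructor
  · intro A s
    ext σ
    constructor
    · rintro ⟨σG, h1, h2⟩
      refine ⟨σG, ?_, h2⟩
      rw [canM_av_univ hne s]; exact h1
    · rintro ⟨σG, h1, h2⟩
      refine ⟨σG, ?_, h2⟩
      rw [canM_av_univ hne s] at h1; exact h1
  · intro s
    rw [canM_av_univ hne s]
    ext σ
    simp only [Set.mem_setOf_eq, canM_out_univ hne s]
    rfl
  · intro A s σ
    ext t
    constructor
    · rintro ⟨σG, h1, h2⟩
      exact ⟨σG, h1, (canM_out_univ hne s σG).symm ▸ h2⟩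
    · rintro ⟨σG, h1, h2⟩
      exact ⟨σG, h1, (canM_out_univ hne s σG) ▸ h2⟩

/-! ### Boxed reasoning inside an MCS -/

section Boxes
variable {Γ : Set (Formula Agent AP)} {χ φ ψ : Formula Agent AP}

lemma box_foldr (hΓ : IsMCS Γ) (l : List (Formula Agent AP))
    (hb : Formula.coal ∅ (l.foldr Formula.imp χ) ∈ Γ)
    (hl : ∀ ψ ∈ l, Formula.coal (∅ : Set Agent) ψ ∈ Γ) :
    Formula.coal (∅ : Set Agent) χ ∈ Γ := by
  induction l with
  | nil => exact hb
  | cons a t ih =>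
    have h1 : Formula.coal (∅ : Set Agent) (t.foldr Formula.imp χ) ∈ Γ :=
      mcs_mp hΓ (mcs_mp hΓ (mcs_thm hΓ (MCLProv.mg ∅ a (t.foldr Formula.imp χ))) hb)
        (hl a List.mem_cons_self)
    exact ih h1 fun ψ hψ => hl ψ (List.mem_cons_of_mem _ hψ)

lemma sprov_lam_box (hΓ : IsMCS Γ)
    (hbox : Formula.coal (∅ : Set Agent) Formula.top ∈ Γ)
    (h : SProv (Lam Γ) χ) : Formula.coal (∅ : Set Agent) χ ∈ Γ := by
  obtain ⟨l, hl, hp⟩ := h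
  have hb : Formula.coal (∅ : Set Agent) (l.foldr Formula.imp χ) ∈ Γ :=
    mcs_mp hΓ (mcs_thm hΓ (MCLProv.cn ∅ Formula.top hp)) hbox
  exact box_foldr hΓ l hb fun ψ hψ => hl ψ hψ

/-- Key consistency lemma: if `⟨B⟩φ ∈ Γ` then `Λ(Γ) ∪ {φ}` is consistent. -/
lemma lam_union_cons (hΓ : IsMCS Γ) {B : Set Agent}
    (h : Formula.coal B φ ∈ Γ) : Consistent (Lam Γ ∪ {φ}) := by
  have hbox : Formula.coal (∅ : Set Agent) Formula.top ∈ Γ :=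
    mcs_mp hΓ (mcs_thm hΓ (MCLProv.cn B φ (MCLProv.tau taut_top))) h
  intro hbot
  have h1 : SProv (Lam Γ) (φ.imp Formula.bot) := sprov_extract hbot
  have h2 : Formula.coal (∅ : Set Agent) (φ.imp Formula.bot) ∈ Γ :=
    sprov_lam_box hΓ hbox h1
  have h3 : Formula.coal B Formula.bot ∈ Γ :=
    mcs_mp hΓ (mcs_mp hΓ (mcs_thm hΓ (MCLProv.mg B φ Formula.bot)) h2) h
  exact mcs_not_neg hΓ h3 (mcs_thm hΓ (MCLProv.live B))

end Boxes

end MCLC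
namespace MCLC

variable {Agent AP : Type}

/-- Extension of a joint action of `A` to a grand joint action by `none` outside `A`. -/
noncomputable def extOf (A : Set Agent) (σ : JA Agent (Option (Formula Agent AP)) A) :
    JA Agent (Option (Formula Agent AP)) (Set.univ : Set Agent) :=
  fun a _ => if h : a ∈ A then σ a h else none

lemma restrict_extOf (A : Set Agent) (σ : JA Agent (Option (Formula Agent AP)) A) :
    JA.restrict (Set.subset_univ A) (extOf A σ) = σ := by
  funext a ha
  exact dif_pos ha

lemma extOf_eq_some {A : Set Agent} {σ : JA Agent (Option (Formula Agent AP)) A}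
    {a : Agent} {χ : Formula Agent AP} (pf : a ∈ (Set.univ : Set Agent))
    (h : extOf A σ a pf = some χ) : ∃ ha : a ∈ A, σ a ha = some χ := by
  by_cases hA : a ∈ A
  · refine ⟨hA, ?_⟩
    simpa only [extOf, dif_pos hA] using h
  · exfalso
    simp only [extOf, dif_neg hA] at h
    exact Option.some_ne_none χ h.symm

variable (hne : Nonempty (MCSet Agent AP))

/-- The truth lemma for the canonical model. -/
lemma truth (φ : Formula Agent AP) (Γ : MCSet Agent AP) :
    Sat (canM hne) Γ φ ↔ φ ∈ Γ.1 := by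
  induction φ generalizing Γ with
  | top =>
    simp only [Sat]
    exact ⟨fun _ => mcs_thm Γ.2 (MCLProv.tau taut_top), fun _ => trivial⟩
  | atom p => exact Iff.rfl
  | neg ψ ih =>
    simp only [Sat]
    rw [ih Γ]
    exact (mcs_neg_iff Γ.2).symm
  | and ψ χ ih1 ih2 =>
    simp only [Sat]
    rw [ih1 Γ, ih2 Γ]
    exact (mcs_and_iff Γ.2).symm
  | coal A ψ ih =>
    constructor
    · rintro ⟨σ, ⟨σG', hne', hres'⟩, hall⟩
      obtain ⟨hbox, hss'⟩ := outU_cond hne'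
      have hres₀ : JA.restrict (Set.subset_univ A) (extOf A σ) = σ := restrict_extOf A σ
      have hTsub : ∀ σG, JA.restrict (Set.subset_univ A) σG = σ →
          Trig Γ.1 (extOf A σ) ⊆ Trig Γ.1 σG := by
        intro σG hres χ hχ
        obtain ⟨B, hBne, hBΓ, hvote⟩ := hχ
        refine ⟨B, hBne, hBΓ, fun a ha => ?_⟩
        obtain ⟨hA, hsome⟩ := extOf_eq_some (Set.mem_univ a) (hvote a ha)
        have h2 : σG a (Set.mem_univ a) = σ a hA := congrFun (congrFun hres a) hA
        rw [h2, hsome]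
      have hss₀ : (Trig Γ.1 (extOf A σ)).Subsingleton := hss'.anti (hTsub σG' hres')
      have hOut₀ : OutU Γ (extOf A σ) =
          {Δ | Lam Γ.1 ⊆ Δ.1 ∧ Trig Γ.1 (extOf A σ) ⊆ Δ.1} := if_pos ⟨hbox, hss₀⟩
      have hkey : ∀ Δ : MCSet Agent AP,
          Lam Γ.1 ⊆ Δ.1 → Trig Γ.1 (extOf A σ) ⊆ Δ.1 → ψ ∈ Δ.1 := by
        intro Δ h1 h2
        have hΔout : Δ ∈ (canM hne).out A Γ σ :=
          ⟨extOf A σ, hres₀, by rw [hOut₀]; exact ⟨h1, h2⟩⟩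
        exact (ih Δ).mp (hall Δ hΔout)
      by_cases hC : Consistent (Lam Γ.1 ∪ Trig Γ.1 (extOf A σ) ∪ {ψ.neg})
      · obtain ⟨Δs, hΔsub, hΔmcs⟩ := lindenbaum hC
        have h1 : Lam Γ.1 ⊆ Δs := fun x hx => hΔsub (Or.inl (Or.inl hx))
        have h2 : Trig Γ.1 (extOf A σ) ⊆ Δs := fun x hx => hΔsub (Or.inl (Or.inr hx))
        have hψ : ψ ∈ Δs := hkey ⟨Δs, hΔmcs⟩ h1 h2
        exact absurd (hΔsub (Or.inr rfl)) (mcs_not_neg hΔmcs hψ)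
      · have hb : SProv (Lam Γ.1 ∪ Trig Γ.1 (extOf A σ) ∪ {ψ.neg}) Formula.bot := by
          by_contra hnb; exact hC hnb
        have h1 : SProv (Lam Γ.1 ∪ Trig Γ.1 (extOf A σ)) (ψ.neg.imp Formula.bot) :=
          sprov_extract hb
        rcases Set.eq_empty_or_nonempty (Trig Γ.1 (extOf A σ)) with hT | ⟨χ, hχ⟩
        · rw [hT, Set.union_empty] at h1
          have h2 : SProv (Lam Γ.1) ψ :=
            sprov_mp (sprov_of_prov (MCLProv.tau (taut_dne ψ))) h1
          have h3 := sprov_lam_box Γ.2 hbox h2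
          exact mcs_mp Γ.2 (mcs_thm Γ.2 (MCLProv.mc (Set.empty_subset A) ψ)) h3
        · have hTeq : Trig Γ.1 (extOf A σ) = {χ} := hss₀.eq_singleton_of_mem hχ
          rw [hTeq] at h1
          have h2 : SProv (Lam Γ.1) (χ.imp (ψ.neg.imp Formula.bot)) := sprov_extract h1
          have h3 := sprov_lam_box Γ.2 hbox h2
          have h4 : Formula.coal (∅ : Set Agent) (χ.imp ψ) ∈ Γ.1 :=
            mcs_mp Γ.2 (mcs_thm Γ.2 (prov_rm ∅ (MCLProv.tau (taut_negi χ ψ)))) h3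
          obtain ⟨B, hBne, hBΓ, hvote⟩ := hχ
          have hBA : B ⊆ A := fun a ha => (extOf_eq_some (Set.mem_univ a) (hvote a ha)).1
          have h5 : Formula.coal B ψ ∈ Γ.1 :=
            mcs_mp Γ.2 (mcs_mp Γ.2 (mcs_thm Γ.2 (MCLProv.mg B χ ψ)) h4) hBΓ
          exact mcs_mp Γ.2 (mcs_thm Γ.2 (MCLProv.mc hBA ψ)) h5
    · intro hmem
      have hbox : Formula.coal (∅ : Set Agent) Formula.top ∈ Γ.1 :=
        mcs_mp Γ.2 (mcs_thm Γ.2 (MCLProv.cn A ψ (MCLProv.tau taut_top))) hmem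
      have hcons : Consistent (Lam Γ.1 ∪ {ψ}) := lam_union_cons Γ.2 hmem
      refine ⟨fun _ _ => some ψ, ?_, ?_⟩
      · -- availability
        refine ⟨extOf A fun _ _ => some ψ, ?_, restrict_extOf A _⟩
        have hTsub : Trig Γ.1 (extOf A fun _ _ => some ψ) ⊆ {ψ} := by
          rintro χ ⟨B, ⟨a, haB⟩, hBΓ, hvote⟩
          obtain ⟨hA, hsome⟩ := extOf_eq_some (Set.mem_univ a) (hvote a haB)
          exact (Option.some.inj hsome).symm
        have hss : (Trig Γ.1 (extOf A fun _ _ => some ψ)).Subsingleton :=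
          Set.subsingleton_singleton.anti hTsub
        obtain ⟨Δs, hΔsub, hΔmcs⟩ := lindenbaum hcons
        have hΔmem : (⟨Δs, hΔmcs⟩ : MCSet Agent AP) ∈ OutU Γ (extOf A fun _ _ => some ψ) := by
          rw [OutU, if_pos ⟨hbox, hss⟩]
          refine ⟨fun x hx => hΔsub (Or.inl hx), fun x hx => ?_⟩
          have : x = ψ := hTsub hx
          exact this ▸ hΔsub (Or.inr rfl)
        exact Set.nonempty_iff_ne_empty.mp ⟨_, hΔmem⟩
      · -- all outcomes satisfy ψ
        rintro Δ ⟨σG, hres', hΔ⟩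
        obtain ⟨hLam, hTrig⟩ := outU_mem hΔ
        refine (ih Δ).mpr ?_
        rcases Set.eq_empty_or_nonempty A with hA | ⟨a₀, ha₀⟩
        · subst hA
          exact hLam hmem
        · refine hTrig ⟨A, ⟨a₀, ha₀⟩, hmem, fun a ha => ?_⟩
          exact congrFun (congrFun hres' a) ha

/-- Completeness of MCL. -/
theorem completeness (φ : Formula Agent AP) (h : MCLValid φ) : MCLProv φ := by
  by_contra hnp
  have hcons : Consistent ({Formula.neg φ} : Set (Formula Agent AP)) := by
    rintro ⟨l, hl, hp⟩
    have hsub : ∀ x ∈ l, x ∈ [Formula.neg φ] := by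
      intro x hx; simpa using hl x hx
    have h2 : MCLProv ((Formula.neg φ).imp Formula.bot) := foldr_subset hsub hp
    exact hnp ((MCLProv.tau (taut_dne φ)).mp h2)
  obtain ⟨Γs, hΓsub, hΓmcs⟩ := lindenbaum hcons
  have hne : Nonempty (MCSet Agent AP) := ⟨⟨Γs, hΓmcs⟩⟩
  have hsat : Sat (canM hne) ⟨Γs, hΓmcs⟩ φ := h (canM hne) (canM_gcgm hne) _
  have hmem : φ ∈ Γs := (truth hne φ ⟨Γs, hΓmcs⟩).mp hsat
  exact mcs_not_neg hΓmcs hmem (hΓsub rfl)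

end MCLC

/-- completeness of MCL. -/
theorem stmt18 {Agent AP : Type} [Fintype Agent] [Nonempty Agent] [Countable AP]
    (φ : Formula Agent AP) (h : MCLValid φ) : MCLProv φ := by
  exact MCLC.completeness φ h
end

section
/- Grafted models preserve truth at the grafted points: let (M, s_0) be the pointed model grafted from a nonempty family of pointed general concurrent game models {(M_i, s_i) | i ∈ I} (with pairwise disjoint state sets and pairwise disjoint action sets), a satisfiable elementary conjunction γ, and a general game form F whose new state s_0 occurs in no M_i, whose set of outcome states is S = {s_i | i ∈ I}, and whose action set is disjoint from each action set of the M_i. Then M is a general concurrent game model, and for every i ∈ I and every formula φ of the language Φ, M_i, s_i ⊨ φ if and only if M, s_i ⊨ φ. -/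
open scoped Classical

section Aux

variable {Agent AP ι : Type}

lemma grafted_av_none (Mi : ι → AMAM Agent AP) (si : (i : ι) → (Mi i).State)
    (γ : Formula Agent AP) (F : GameForm Agent ι) (A : Set Agent) :
    (grafted Mi si γ F).av A none
      = {σ | ∃ τ ∈ F.av0 A, σ = fun a ha => Sum.inl (τ a ha)} := rfl

lemma grafted_av_some (Mi : ι → AMAM Agent AP) (si : (i : ι) → (Mi i).State)
    (γ : Formula Agent AP) (F : GameForm Agent ι) (A : Set Agent) (i : ι)
    (u : (Mi i).State) :
    (grafted Mi si γ F).av A (some ⟨i, u⟩)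
      = {σ | ∃ τ ∈ (Mi i).av A u, σ = fun a ha => Sum.inr ⟨i, τ a ha⟩} := rfl

lemma grafted_out_none (Mi : ι → AMAM Agent AP) (si : (i : ι) → (Mi i).State)
    (γ : Formula Agent AP) (F : GameForm Agent ι) (A : Set Agent)
    (σ : JA Agent (grafted Mi si γ F).Action A) :
    (grafted Mi si γ F).out A none σ
      = {t | ∃ τ : JA Agent F.Action0 A,
        (σ = fun a ha => Sum.inl (τ a ha)) ∧ ∃ j ∈ F.out0 A τ, t = some ⟨j, si j⟩} := rfl

lemma grafted_out_some (Mi : ι → AMAM Agent AP) (si : (i : ι) → (Mi i).State)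
    (γ : Formula Agent AP) (F : GameForm Agent ι) (A : Set Agent) (i : ι)
    (u : (Mi i).State) (σ : JA Agent (grafted Mi si γ F).Action A) :
    (grafted Mi si γ F).out A (some ⟨i, u⟩) σ
      = {t | ∃ τ : JA Agent (Mi i).Action A,
        (σ = fun a ha => Sum.inr ⟨i, τ a ha⟩) ∧ ∃ u' ∈ (Mi i).out A u τ, t = some ⟨i, u'⟩} := rfl

lemma inr_fun_inj {Mi : ι → AMAM Agent AP} {F : GameForm Agent ι} {A : Set Agent} {i : ι}
    {τ τ' : JA Agent (Mi i).Action A}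
    (h : (fun a ha => (Sum.inr ⟨i, τ a ha⟩ : F.Action0 ⊕ ((i : ι) × (Mi i).Action)))
        = fun a ha => Sum.inr ⟨i, τ' a ha⟩) : τ = τ' := by
  funext a ha
  have := congrFun (congrFun h a) ha
  simpa using this

lemma inl_fun_inj {F : GameForm Agent ι} {Mi : ι → AMAM Agent AP} {A : Set Agent}
    {τ τ' : JA Agent F.Action0 A}
    (h : (fun a ha => (Sum.inl (τ a ha) : F.Action0 ⊕ ((i : ι) × (Mi i).Action)))
        = fun a ha => Sum.inl (τ' a ha)) : τ = τ' := by
  funext a ha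
  have := congrFun (congrFun h a) ha
  simpa using this

lemma grafted_truth (Mi : ι → AMAM Agent AP) (si : (i : ι) → (Mi i).State)
    (γ : Formula Agent AP) (F : GameForm Agent ι)
    (φ : Formula Agent AP) (i : ι) (u : (Mi i).State) :
    Sat (Mi i) u φ ↔ Sat (grafted Mi si γ F) (some ⟨i, u⟩) φ := by
  induction φ generalizing u with
  | top => simp [Sat]
  | atom p =>
    show _ ↔ p ∈ (grafted Mi si γ F).lab (some ⟨i, u⟩)
    exact Iff.rfl
  | neg φ ih => exact not_congr (ih u)
  | and φ ψ ihφ ihψ => exact and_congr (ihφ u) (ihψ u)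
  | coal A φ ih =>
    show _ ↔ ∃ σ ∈ (grafted Mi si γ F).av A (some ⟨i, u⟩), _
    rw [grafted_av_some]
    constructor
    · rintro ⟨τ, hτ, hall⟩
      refine ⟨fun a ha => Sum.inr ⟨i, τ a ha⟩, ⟨τ, hτ, rfl⟩, ?_⟩
      intro t ht
      obtain ⟨τ', hστ', u', hu', rfl⟩ := ht
      have hττ' : τ = τ' := inr_fun_inj hστ'
      exact (ih u').mp (hall u' (hττ' ▸ hu'))
    · rintro ⟨σ, ⟨τ, hτ, rfl⟩, hall⟩
      refine ⟨τ, hτ, fun u' hu' => (ih u').mpr (hall (some ⟨i, u'⟩) ?_)⟩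
      exact Set.mem_setOf.mpr ⟨τ, rfl, u', hu', rfl⟩

end Aux

/-- the grafted model is a general concurrent game model, and truth
is preserved at the grafted points. -/
theorem stmt19 {Agent AP ι : Type} [Fintype Agent] [Nonempty Agent] [Countable AP]
    [Nonempty ι]
    (Mi : ι → AMAM Agent AP) (hMi : ∀ i : ι, IsGCGM (Mi i))
    (si : (i : ι) → (Mi i).State)
    (γ : Formula Agent AP) (hγ : IsElemConj γ) (hsat : PropSatisfiable γ)
    (F : GameForm Agent ι) :
    IsGCGM (grafted Mi si γ F) ∧
    ∀ (i : ι) (φ : Formula Agent AP),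
      Sat (Mi i) (si i) φ ↔ Sat (grafted Mi si γ F) (some ⟨i, si i⟩) φ := by
  refine ⟨⟨?_, ?_, ?_⟩, fun i φ => grafted_truth Mi si γ F φ i (si i)⟩
  · -- av_restrict
    intro A s
    match s with
    | none =>
      ext σ
      rw [grafted_av_none]
      simp only [Set.mem_setOf_eq]
      constructor
      · rintro ⟨τ, hτ, rfl⟩
        rw [F.av0_restrict] at hτ
        obtain ⟨τG, hτG, rfl⟩ := hτ
        refine ⟨fun a ha => Sum.inl (τG a ha), ?_, rfl⟩
        rw [grafted_av_none]
        exact ⟨τG, hτG, rfl⟩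
      · rintro ⟨σG, hσG, rfl⟩
        rw [grafted_av_none] at hσG
        obtain ⟨τG, hτG, rfl⟩ := hσG
        refine ⟨JA.restrict (Set.subset_univ A) τG, ?_, rfl⟩
        rw [F.av0_restrict]
        exact ⟨τG, hτG, rfl⟩
    | some ⟨i, u⟩ =>
      ext σ
      rw [grafted_av_some]
      simp only [Set.mem_setOf_eq]
      constructor
      · rintro ⟨τ, hτ, rfl⟩
        rw [(hMi i).av_restrict] at hτ
        obtain ⟨τG, hτG, rfl⟩ := hτ
        refine ⟨fun a ha => Sum.inr ⟨i, τG a ha⟩, ?_, rfl⟩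
        rw [grafted_av_some]
        exact ⟨τG, hτG, rfl⟩
      · rintro ⟨σG, hσG, rfl⟩
        rw [grafted_av_some] at hσG
        obtain ⟨τG, hτG, rfl⟩ := hσG
        refine ⟨JA.restrict (Set.subset_univ A) τG, ?_, rfl⟩
        rw [(hMi i).av_restrict]
        exact ⟨τG, hτG, rfl⟩
  · -- av_grand
    intro s
    match s with
    | none =>
      ext σ
      rw [grafted_av_none]
      simp only [Set.mem_setOf_eq]
      constructor
      · rintro ⟨τ, hτ, rfl⟩
        rw [F.av0_out] at hτ
        obtain ⟨j, hj⟩ := Set.nonempty_iff_ne_empty.mpr hτ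
        intro h
        have : some ⟨j, si j⟩ ∈ (∅ : Set (grafted Mi si γ F).State) := by
          rw [← h]; exact Set.mem_setOf.mpr ⟨τ, rfl, j, hj, rfl⟩
        exact absurd this (Set.notMem_empty _)
      · intro h
        rw [grafted_out_none] at h
        obtain ⟨t, τ, rfl, j, hj, rfl⟩ := Set.nonempty_iff_ne_empty.mpr h
        refine ⟨τ, ?_, rfl⟩
        rw [F.av0_out]
        exact (Set.nonempty_of_mem hj).ne_empty
    | some ⟨i, u⟩ =>
      ext σ
      rw [grafted_av_some]
      simp only [Set.mem_setOf_eq]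
      constructor
      · rintro ⟨τ, hτ, rfl⟩
        rw [(hMi i).av_grand] at hτ
        obtain ⟨u', hu'⟩ := Set.nonempty_iff_ne_empty.mpr hτ
        intro h
        have : some ⟨i, u'⟩ ∈ (∅ : Set (grafted Mi si γ F).State) := by
          rw [← h]; exact Set.mem_setOf.mpr ⟨τ, rfl, u', hu', rfl⟩
        exact absurd this (Set.notMem_empty _)
      · intro h
        obtain ⟨t, ht⟩ := Set.nonempty_iff_ne_empty.mpr h
        rw [grafted_out_some] at ht
        obtain ⟨τ, rfl, u', hu', rfl⟩ := ht
        refine ⟨τ, ?_, rfl⟩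
        rw [(hMi i).av_grand]
        exact (Set.nonempty_of_mem hu').ne_empty
  · -- out_union
    intro A s σ
    match s with
    | none =>
      ext t
      rw [grafted_out_none]
      simp only [Set.mem_setOf_eq]
      constructor
      · rintro ⟨τ, rfl, j, hj, rfl⟩
        rw [F.out0_union] at hj
        obtain ⟨τG, hres, hjG⟩ := hj
        refine ⟨fun a ha => Sum.inl (τG a ha), ?_, ?_⟩
        · subst hres; rfl
        · exact Set.mem_setOf.mpr ⟨τG, rfl, j, hjG, rfl⟩
      · rintro ⟨σG, hres, ht⟩
        rw [grafted_out_none] at ht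
        obtain ⟨τG, rfl, j, hjG, rfl⟩ := ht
        refine ⟨JA.restrict (Set.subset_univ A) τG, hres.symm, j, ?_, rfl⟩
        rw [F.out0_union]
        exact ⟨τG, rfl, hjG⟩
    | some ⟨i, u⟩ =>
      ext t
      rw [grafted_out_some]
      simp only [Set.mem_setOf_eq]
      constructor
      · rintro ⟨τ, rfl, u', hu', rfl⟩
        rw [(hMi i).out_union] at hu'
        obtain ⟨τG, hres, huG⟩ := hu'
        refine ⟨fun a ha => Sum.inr ⟨i, τG a ha⟩, ?_, ?_⟩
        · subst hres; rfl
        · exact Set.mem_setOf.mpr ⟨τG, rfl, u', huG, rfl⟩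
      · rintro ⟨σG, hres, ht⟩
        rw [grafted_out_some] at ht
        obtain ⟨τG, rfl, u', huG, rfl⟩ := ht
        refine ⟨JA.restrict (Set.subset_univ A) τG, hres.symm, u', ?_, rfl⟩
        rw [(hMi i).out_union]
        exact ⟨τG, rfl, huG⟩
end
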